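/- Let p be a prime. Every finite 2-generated p-group of nilpotency class exactly 2 is isomorphic to G_p(m,n1,n2,s1,s2) for some admissible tuple (m,n1,n2,s1,s2). -/

import Mathlib

/-- The set of relators for the presented group `G_p(m,n1,n2,s1,s2)` on two generators
`b1, b2`, with `a = [b2,b1] = b2⁻¹ * b1⁻¹ * b2 * b1`:
`a ^ p^m = 1`, `[b1,a] = 1`, `[b2,a] = 1`, `b1 ^ p^n1 = a ^ p^s1`, `b2 ^ p^n2 = a ^ p^s2`. -/
def pgRels (p m n1 n2 s1 s2 : ℕ) : Set (FreeGroup (Fin 2)) :=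
  let b1 : FreeGroup (Fin 2) := FreeGroup.of 0
  let b2 : FreeGroup (Fin 2) := FreeGroup.of 1
  let a : FreeGroup (Fin 2) := b2⁻¹ * b1⁻¹ * b2 * b1
  {a ^ p ^ m,
   b1⁻¹ * a⁻¹ * b1 * a,
   b2⁻¹ * a⁻¹ * b2 * a,
   b1 ^ p ^ n1 * (a ^ p ^ s1)⁻¹,
   b2 ^ p ^ n2 * (a ^ p ^ s2)⁻¹}

/-- The group `G_p(m,n1,n2,s1,s2)` given by the presentation
`⟨b1, b2 ∣ [b2,b1]^(p^m) = [b1,[b2,b1]] = [b2,[b2,b1]] = 1,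
  b1^(p^n1) = [b2,b1]^(p^s1), b2^(p^n2) = [b2,b1]^(p^s2)⟩`. -/
abbrev GG (p m n1 n2 s1 s2 : ℕ) : Type := PresentedGroup (pgRels p m n1 n2 s1 s2)

/-- A tuple `(m,n1,n2,s1,s2)` is admissible for the prime `p` if:
(A1) `0 < m` and `s1 ≤ m`, `s2 ≤ m ≤ n2 ≤ n1`;
(A2) `n1 - s1 ≥ n2 - s2` (stated without truncated subtraction);
(A3) if `p = 2` then `s1 < n1`;
(A4) either `s1 ≥ s2`, or `p = 2` and `n1 = n2 = m = s2 = s1 + 1`. -/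
def Admissible (p m n1 n2 s1 s2 : ℕ) : Prop :=
  (0 < m ∧ s1 ≤ m ∧ s2 ≤ m ∧ m ≤ n2 ∧ n2 ≤ n1) ∧
  n2 + s1 ≤ n1 + s2 ∧
  (p = 2 → s1 < n1) ∧
  (s2 ≤ s1 ∨ (p = 2 ∧ n1 = n2 ∧ n2 = m ∧ m = s2 ∧ s2 = s1 + 1))


open Subgroup
open scoped commutatorElement


/-- `Kc a b = a⁻¹ * b⁻¹ * a * b`, so that `a * b = b * a * Kc a b`. -/
def Kc {G : Type*} [Group G] (a b : G) : G := a⁻¹ * b⁻¹ * a * b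

section KcBasic
variable {G : Type*} [Group G]

lemma swap_eq (a b : G) : a * b = b * a * Kc a b := by unfold Kc; group

lemma Kc_eq_of_swap {a b k : G} (h : a * b = b * a * k) : Kc a b = k :=
  mul_left_cancel (((swap_eq a b).symm.trans h))

lemma Kc_inv_rel (a b : G) : Kc a b = (Kc b a)⁻¹ := by unfold Kc; group

lemma Kc_one_left (b : G) : Kc 1 b = 1 := by unfold Kc; group

lemma Kc_self (a : G) : Kc a a = 1 := by unfold Kc; group

lemma Kc_eq_commutatorElement (a b : G) : Kc a b = ⁅a⁻¹, b⁻¹⁆ := by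
  rw [commutatorElement_def]; unfold Kc; group

lemma Kc_central_right (a b : G) (h : ∀ g : G, Commute a g) : Kc b a = 1 := by
  have : b * a = a * b := ((h b).symm).eq
  have h2 : b * a = a * b * 1 := by rw [mul_one, this]
  rw [← Kc_eq_of_swap h2]

lemma Kc_central_left (a b : G) (h : ∀ g : G, Commute a g) : Kc a b = 1 := by
  rw [Kc_inv_rel, Kc_central_right _ _ h, inv_one]

variable {x y c : G} (hc : ∀ g : G, Commute c g) (hsw : y * x = x * y * c)

section
include hc hsw

lemma lemA (n : ℕ) : y * x ^ n = x ^ n * y * c ^ n := by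
  induction n with
  | zero => simp
  | succ n ih =>
    calc y * x ^ (n+1) = (y * x ^ n) * x := by rw [pow_succ, mul_assoc]
      _ = x ^ n * y * c ^ n * x := by rw [ih]
      _ = x ^ n * y * x * c ^ n := by
          rw [mul_assoc (x ^ n * y), ((hc x).pow_left n).eq]; group
      _ = x ^ n * (x * y * c) * c ^ n := by rw [mul_assoc (x ^ n), ← hsw]
      _ = x ^ (n+1) * y * c ^ (n+1) := by rw [pow_succ, pow_succ]; group

lemma lemC (j n : ℕ) : y ^ j * x ^ n = x ^ n * y ^ j * c ^ (j * n) := by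
  induction j with
  | zero => simp
  | succ j ih =>
    calc y ^ (j+1) * x ^ n = y ^ j * (y * x ^ n) := by rw [pow_succ]; group
      _ = y ^ j * (x ^ n * y * c ^ n) := by rw [lemA hc hsw]
      _ = (y ^ j * x ^ n) * y * c ^ n := by group
      _ = x ^ n * y ^ j * c ^ (j*n) * y * c ^ n := by rw [ih]
      _ = x ^ n * y ^ j * y * c ^ (j*n) * c ^ n := by
          rw [mul_assoc (x ^ n * y ^ j), ((hc y).pow_left (j*n)).eq]; group
      _ = x ^ n * y ^ (j+1) * c ^ ((j+1) * n) := by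
          rw [pow_succ, add_mul, one_mul, pow_add]; group

lemma lemP3 (n : ℕ) : (x * y) ^ n = x ^ n * y ^ n * c ^ n.choose 2 := by
  induction n with
  | zero => simp
  | succ n ih =>
    have hch : (n+1).choose 2 = n.choose 2 + n := by
      rw [Nat.choose_succ_succ, Nat.choose_one_right, Nat.add_comm]
    calc (x * y) ^ (n+1) = (x * y) ^ n * (x * y) := by rw [pow_succ]
      _ = x ^ n * y ^ n * c ^ n.choose 2 * (x * y) := by rw [ih]
      _ = x ^ n * y ^ n * (x * y) * c ^ n.choose 2 := by
          rw [mul_assoc (x ^ n * y ^ n), ((hc (x * y)).pow_left (n.choose 2)).eq]; group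
      _ = x ^ n * (y ^ n * x) * y * c ^ n.choose 2 := by group
      _ = x ^ n * (x * y ^ n * c ^ (n*1)) * y * c ^ n.choose 2 := by
          rw [← pow_one x, lemC hc hsw n 1, pow_one]
      _ = x ^ (n+1) * y ^ (n+1) * c ^ ((n+1).choose 2) := by
          rw [hch, pow_succ, pow_succ, pow_add, mul_one]
          have h1 : c ^ n * (y * c ^ (n.choose 2)) = y * (c ^ n.choose 2 * c ^ n) := by
            rw [← mul_assoc, ((hc y).pow_left n).eq, mul_assoc, ← pow_add, ← pow_add,
              Nat.add_comm]
          simp only [mul_assoc]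
          rw [h1]

lemma Kc_pow_left (j : ℕ) : Kc (y ^ j) x = c ^ j := by
  apply Kc_eq_of_swap
  have := lemC hc hsw j 1
  rw [pow_one, mul_one] at this
  exact this

lemma Kc_pow_right (n : ℕ) : Kc y (x ^ n) = c ^ n := by
  apply Kc_eq_of_swap
  have := lemC hc hsw 1 n
  rw [pow_one, one_mul] at this
  exact this

end
end KcBasic

section ClassTwo
variable {G : Type*} [Group G] (hcl : commutator G ≤ Subgroup.center G)

lemma Kc_mem_commutator (a b : G) : Kc a b ∈ commutator G := by
  rw [Kc_eq_commutatorElement]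
  exact Subgroup.commutator_mem_commutator (Subgroup.mem_top _) (Subgroup.mem_top _)

include hcl

lemma Kc_commute (a b g : G) : Commute (Kc a b) g :=
  ((Subgroup.mem_center_iff.mp (hcl (Kc_mem_commutator a b)) g).symm : _)

lemma Kc_mul_left (a b g : G) : Kc (a * b) g = Kc a g * Kc b g := by
  apply Kc_eq_of_swap
  calc a * b * g = a * (g * b * Kc b g) := by rw [mul_assoc, ← swap_eq]
    _ = (a * g) * b * Kc b g := by group
    _ = g * a * Kc a g * b * Kc b g := by rw [swap_eq a g]
    _ = g * (a * b) * (Kc a g * Kc b g) := by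
        rw [mul_assoc (g * a), (Kc_commute hcl a g b).eq]; group

lemma Kc_inv_left (a g : G) : Kc a⁻¹ g = (Kc a g)⁻¹ := by
  have h := Kc_mul_left hcl a a⁻¹ g
  rw [mul_inv_cancel, Kc_one_left] at h
  exact (inv_eq_of_mul_eq_one_right h.symm).symm

lemma Kc_mul_right (g a b : G) : Kc g (a * b) = Kc g a * Kc g b := by
  rw [Kc_inv_rel, Kc_mul_left hcl, mul_inv_rev, ← Kc_inv_rel, ← Kc_inv_rel]
  exact ((Kc_commute hcl g b (Kc g a)).eq : _)

lemma Kc_inv_right (g a : G) : Kc g a⁻¹ = (Kc g a)⁻¹ := by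
  rw [Kc_inv_rel, Kc_inv_left hcl, ← Kc_inv_rel]

/-- If `x, y` together with the commutator subgroup generate `G` (class ≤ 2), then
they generate `G` and the commutator subgroup is cyclic generated by `Kc y x`. -/
lemma commutator_eq_zpowers (x y : G)
    (h : Subgroup.closure {x, y} ⊔ commutator G = ⊤) :
    commutator G = Subgroup.zpowers (Kc y x) ∧ Subgroup.closure {x, y} = ⊤ := by
  set N := Subgroup.zpowers (Kc y x) with hN
  have hcent : ∀ d : G, d ∈ commutator G → ∀ g : G, Commute d g := by
    intro d hd g
    exact ((Subgroup.mem_center_iff.mp (hcl hd) g).symm : _)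
  -- inner step
  have inner : ∀ h0 : G, Kc x h0 ∈ N → Kc y h0 ∈ N → ∀ g, Kc g h0 ∈ N := by
    intro h0 hx hy g
    let S : Subgroup G :=
      { carrier := {g | Kc g h0 ∈ N}
        one_mem' := by
          show Kc 1 h0 ∈ N
          rw [Kc_one_left]; exact one_mem N
        mul_mem' := by
          intro a b ha hb
          simp only [Set.mem_setOf_eq] at *
          rw [Kc_mul_left hcl]
          exact mul_mem ha hb
        inv_mem' := by
          intro a ha
          simp only [Set.mem_setOf_eq] at *
          rw [Kc_inv_left hcl]
          exact inv_mem ha }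
    have htop : (⊤ : Subgroup G) ≤ S := by
      rw [← h]
      apply sup_le
      · rw [Subgroup.closure_le]
        intro z hz
        rcases hz with rfl | hz
        · exact hx
        · rcases hz with rfl
          exact hy
      · intro d hd
        show Kc d h0 ∈ N
        rw [Kc_central_left _ _ (hcent d hd)]
        exact one_mem N
    exact htop (Subgroup.mem_top g)
  have outer : ∀ h0 g : G, Kc g h0 ∈ N := by
    intro h0
    let T : Subgroup G :=
      { carrier := {h1 | ∀ g, Kc g h1 ∈ N}
        one_mem' := by
          intro g
          show Kc g 1 ∈ N
          have h1 : Kc g 1 = 1 := by unfold Kc; group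
          rw [h1]; exact one_mem N
        mul_mem' := by
          intro a b ha hb g
          rw [Kc_mul_right hcl]
          exact mul_mem (ha g) (hb g)
        inv_mem' := by
          intro a ha g
          rw [Kc_inv_right hcl]
          exact inv_mem (ha g) }
    have htop : (⊤ : Subgroup G) ≤ T := by
      rw [← h]
      apply sup_le
      · rw [Subgroup.closure_le]
        intro z hz
        rcases hz with rfl | hz
        · exact inner z (by rw [Kc_self]; exact one_mem N)
            (Subgroup.mem_zpowers _)
        · rcases hz with rfl
          exact inner z (by rw [Kc_inv_rel]; exact inv_mem (Subgroup.mem_zpowers _))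
            (by rw [Kc_self]; exact one_mem N)
      · intro d hd g
        show Kc g d ∈ N
        rw [Kc_central_right _ _ (hcent d hd)]
        exact one_mem N
    exact htop (Subgroup.mem_top h0)
  have hle : commutator G ≤ N := by
    rw [_root_.commutator_def, Subgroup.commutator_le]
    intro g1 _ g2 _
    have : ⁅g1, g2⁆ = Kc g1⁻¹ g2⁻¹ := by rw [Kc_eq_commutatorElement, inv_inv, inv_inv]
    rw [this]
    exact outer _ _
  have hge : N ≤ commutator G := by
    rw [hN, Subgroup.zpowers_le]
    exact Kc_mem_commutator y x
  have hcomm : commutator G = N := le_antisymm hle hge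
  have hNle : N ≤ Subgroup.closure {x, y} := by
    rw [hN, Subgroup.zpowers_le]
    have hx : x ∈ Subgroup.closure {x, y} :=
      Subgroup.subset_closure (Set.mem_insert _ _)
    have hy : y ∈ Subgroup.closure {x, y} :=
      Subgroup.subset_closure (Set.mem_insert_of_mem _ rfl)
    unfold Kc
    exact mul_mem (mul_mem (mul_mem (inv_mem hy) (inv_mem hx)) hy) hx
  refine ⟨hcomm, le_antisymm le_top ?_⟩
  rw [← h]
  exact sup_le le_rfl (hcomm.le.trans hNle)

end ClassTwo



-- helpers about p-groups and orders
lemma orderOf_eq_pow_of_pgroup {A : Type*} [Group A] [Finite A] {p : ℕ} (hp : p.Prime)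
    (hA : IsPGroup p A) (v : A) : ∃ e : ℕ, orderOf v = p ^ e := by
  obtain ⟨k, hk⟩ := hA v
  have := orderOf_dvd_of_pow_eq_one hk
  obtain ⟨e, _, he⟩ := (Nat.dvd_prime_pow hp).mp this
  exact ⟨e, he⟩

lemma mem_zpowers_nat {A : Type*} [Group A] [Finite A] {u g : A}
    (h : g ∈ zpowers u) : ∃ i : ℕ, i < orderOf u ∧ u ^ i = g := by
  obtain ⟨k, hk⟩ := h
  have hpos : 0 < orderOf u := orderOf_pos u
  have hne : (orderOf u : ℤ) ≠ 0 := by exact_mod_cast hpos.ne'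
  refine ⟨(k % (orderOf u : ℤ)).toNat, ?_, ?_⟩
  · have h1 : k % (orderOf u : ℤ) < (orderOf u : ℤ) :=
      Int.emod_lt_of_pos _ (by exact_mod_cast hpos)
    omega
  · have h0 : 0 ≤ k % (orderOf u : ℤ) := Int.emod_nonneg _ hne
    have : u ^ (k % (orderOf u : ℤ)) = u ^ k := zpow_mod_orderOf u k ▸ rfl
    calc u ^ (k % (orderOf u : ℤ)).toNat = u ^ (k % (orderOf u : ℤ)) := by
          rw [← zpow_natCast]; congr 1; omega
      _ = u ^ k := this
      _ = g := hk

lemma abelian_pair_decomp {A : Type*} [CommGroup A] [Finite A] {p : ℕ} (hp : p.Prime)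
    (hA : IsPGroup p A) (a b : A) (hg : Subgroup.closure {a, b} = ⊤) :
    ∃ u v : A, Subgroup.closure {u, v} = ⊤ ∧
      Subgroup.zpowers u ⊓ Subgroup.zpowers v = ⊥ ∧ orderOf v ≤ orderOf u := by
  classical
  set S : Set ℕ := {n : ℕ | ∃ u v : A, Subgroup.closure {u, v} = ⊤ ∧
    orderOf u * orderOf v = n} with hS
  have hSne : S.Nonempty := ⟨orderOf a * orderOf b, a, b, hg, rfl⟩
  obtain ⟨u, v, hguv, hn0⟩ := Nat.sInf_mem hSne
  -- main claim, assuming orderOf v ≤ orderOf u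
  have claim : ∀ u v : A, Subgroup.closure {u, v} = ⊤ →
      orderOf u * orderOf v = sInf S → orderOf v ≤ orderOf u →
      Subgroup.zpowers u ⊓ Subgroup.zpowers v = ⊥ := by
    intro u v hguv hn0 hvu
    by_contra hne
    obtain ⟨⟨g, hgmem⟩, hgne⟩ := Subgroup.ne_bot_iff_exists_ne_one.mp hne
    have hgne' : g ≠ 1 := by simpa using hgne
    obtain ⟨e1, he1⟩ := orderOf_eq_pow_of_pgroup hp hA u
    obtain ⟨e2, he2⟩ := orderOf_eq_pow_of_pgroup hp hA v
    have hp1 : 1 < p := hp.one_lt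
    have he12 : e2 ≤ e1 := by
      rw [he1, he2] at hvu
      exact (Nat.pow_le_pow_iff_right hp1).mp hvu
    obtain ⟨j, hjlt, hj⟩ := mem_zpowers_nat (hgmem.2 : g ∈ zpowers v)
    have hj0 : j ≠ 0 := by rintro rfl; simp at hj; exact hgne' hj.symm
    set k := j.factorization p with hk
    set r := j / p ^ k with hr
    have hjkr : p ^ k * r = j := Nat.ordProj_mul_ordCompl_eq_self j p
    have hrp : ¬ p ∣ r := Nat.not_dvd_ordCompl hp hj0
    have hklt : k < e2 := by
      by_contra hge
      have hge' : e2 ≤ k := Nat.le_of_not_lt hge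
      have h1 : p ^ e2 ∣ p ^ k := pow_dvd_pow p hge'
      have h2 : p ^ k ∣ j := hjkr ▸ dvd_mul_right _ _
      have h3 := Nat.le_of_dvd (Nat.pos_of_ne_zero hj0) (h1.trans h2)
      rw [he2] at hjlt; omega
    -- v ^ p ^ k ∈ zpowers u
    have hordvj : orderOf (v ^ j) = p ^ (e2 - k) := by
      rw [orderOf_pow, he2]
      congr 1
      have : Nat.gcd (p ^ e2) j = p ^ k := by
        rw [← hjkr]
        have h2 : p ^ e2 = p ^ k * p ^ (e2 - k) := by rw [← pow_add]; congr 1; omega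
        rw [h2, Nat.gcd_mul_left]
        have : Nat.Coprime (p ^ (e2 - k)) r :=
          Nat.Coprime.pow_left _ ((Nat.Prime.coprime_iff_not_dvd hp).mpr hrp)
        rw [Nat.Coprime.gcd_eq_one this, mul_one]
      rw [this, Nat.pow_div (le_of_lt hklt) hp.pos]
    have hordvpk : orderOf (v ^ p ^ k) = p ^ (e2 - k) := by
      rw [orderOf_pow, he2]
      congr 1
      have : Nat.gcd (p ^ e2) (p ^ k) = p ^ k := Nat.gcd_eq_right (pow_dvd_pow p (by omega))
      rw [this, Nat.pow_div (le_of_lt hklt) hp.pos]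
    have hzle : zpowers (v ^ j) ≤ zpowers (v ^ p ^ k) := by
      rw [Subgroup.zpowers_le]
      have : v ^ j = (v ^ p ^ k) ^ r := by rw [← pow_mul, hjkr]
      rw [this]; exact pow_mem (Subgroup.mem_zpowers _) r
    have hzeq : zpowers (v ^ j) = zpowers (v ^ p ^ k) := by
      apply Subgroup.eq_of_le_of_card_ge hzle
      rw [Nat.card_zpowers, Nat.card_zpowers, hordvj, hordvpk]
    have hvpk_in : v ^ p ^ k ∈ zpowers u := by
      have h1 : v ^ p ^ k ∈ zpowers (v ^ j) := by
        rw [hzeq]; exact Subgroup.mem_zpowers _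
      have h2 : zpowers (v ^ j) ≤ zpowers u := by
        rw [Subgroup.zpowers_le, hj]; exact hgmem.1
      exact h2 h1
    have hvpk_ne : v ^ p ^ k ≠ 1 := by
      intro hcon
      have := orderOf_dvd_of_pow_eq_one hcon
      rw [he2] at this
      have := Nat.le_of_dvd (pow_pos hp.pos k) this
      have := (Nat.pow_le_pow_iff_right hp1).mp this
      omega
    obtain ⟨i, hilt, hi⟩ := mem_zpowers_nat hvpk_in
    have hi0 : i ≠ 0 := by rintro rfl; simp at hi; exact hvpk_ne hi.symm
    set l := i.factorization p with hl
    set r2 := i / p ^ l with hr2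
    have hikr : p ^ l * r2 = i := Nat.ordProj_mul_ordCompl_eq_self i p
    have hr2p : ¬ p ∣ r2 := Nat.not_dvd_ordCompl hp hi0
    have hllt : l < e1 := by
      by_contra hge
      have hge' : e1 ≤ l := Nat.le_of_not_lt hge
      have h1 : p ^ e1 ∣ p ^ l := pow_dvd_pow p hge'
      have h2 : p ^ l ∣ i := hikr ▸ dvd_mul_right _ _
      have h3 := Nat.le_of_dvd (Nat.pos_of_ne_zero hi0) (h1.trans h2)
      rw [he1] at hilt; omega
    have hordui : orderOf (u ^ i) = p ^ (e1 - l) := by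
      rw [orderOf_pow, he1]
      congr 1
      have : Nat.gcd (p ^ e1) i = p ^ l := by
        rw [← hikr]
        have h2 : p ^ e1 = p ^ l * p ^ (e1 - l) := by rw [← pow_add]; congr 1; omega
        rw [h2, Nat.gcd_mul_left]
        have : Nat.Coprime (p ^ (e1 - l)) r2 :=
          Nat.Coprime.pow_left _ ((Nat.Prime.coprime_iff_not_dvd hp).mpr hr2p)
        rw [Nat.Coprime.gcd_eq_one this, mul_one]
      rw [this, Nat.pow_div (le_of_lt hllt) hp.pos]
    have heq : e1 - l = e2 - k := by
      have : orderOf (u ^ i) = orderOf (v ^ p ^ k) := by rw [hi]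
      rw [hordui, hordvpk] at this
      exact Nat.pow_right_injective hp.two_le this
    have hkl : k ≤ l := by omega
    set w := u ^ (p ^ (l - k) * r2) with hw
    have hwpk : w ^ p ^ k = v ^ p ^ k := by
      rw [hw, ← pow_mul]
      have : p ^ (l - k) * r2 * p ^ k = p ^ l * r2 := by
        rw [mul_comm _ (p ^ k), ← mul_assoc, ← pow_add]
        congr 2; omega
      rw [this, hikr, hi]
    set v' := v * w⁻¹ with hv'
    have hv'pk : v' ^ p ^ k = 1 := by
      rw [hv', mul_pow, inv_pow, hwpk, mul_inv_cancel]
    have hordv' : orderOf v' ≤ p ^ k := orderOf_le_of_pow_eq_one (pow_pos hp.pos k) hv'pk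
    have hgen' : Subgroup.closure {u, v'} = ⊤ := by
      rw [eq_top_iff, ← hguv, Subgroup.closure_le]
      intro z hz
      rcases hz with rfl | hz
      · exact Subgroup.subset_closure (Set.mem_insert _ _)
      · rcases hz with rfl
        have hv'mem : v' ∈ Subgroup.closure ({u, v'} : Set A) :=
          Subgroup.subset_closure (Set.mem_insert_of_mem _ rfl)
        have humem : u ∈ Subgroup.closure ({u, v'} : Set A) :=
          Subgroup.subset_closure (Set.mem_insert _ _)
        have : z = v' * w := by rw [hv', hw]; group
        rw [this]
        exact mul_mem hv'mem (pow_mem humem _)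
    have hvlt : orderOf v' < orderOf v := by
      calc orderOf v' ≤ p ^ k := hordv'
        _ < p ^ e2 := Nat.pow_lt_pow_right hp1 hklt
        _ = orderOf v := he2.symm
    have hlt : orderOf u * orderOf v' < sInf S := by
      rw [← hn0]
      exact Nat.mul_lt_mul_of_le_of_lt (le_refl _) hvlt (orderOf_pos u)
    have hmem : orderOf u * orderOf v' ∈ S := ⟨u, v', hgen', rfl⟩
    have := Nat.sInf_le hmem
    omega
  rcases le_total (orderOf v) (orderOf u) with hle | hle
  · exact ⟨u, v, hguv, claim u v hguv hn0 hle, hle⟩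
  · have hguv' : Subgroup.closure {v, u} = ⊤ := by rwa [Set.pair_comm]
    have hn0' : orderOf v * orderOf u = sInf S := by rw [mul_comm]; exact hn0
    exact ⟨v, u, hguv', claim v u hguv' hn0' hle, hle⟩


lemma PresentedGroup.mk_rel_eq_one {α : Type*} {rels : Set (FreeGroup α)} {r : FreeGroup α}
    (h : r ∈ rels) : PresentedGroup.mk rels r = 1 :=
  (QuotientGroup.eq_one_iff r).mpr (Subgroup.subset_normalClosure h)

section GGside
variable (p m n1 n2 s1 s2 : ℕ)

local notation "H" => GG p m n1 n2 s1 s2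

namespace GGaux

def B1 : GG p m n1 n2 s1 s2 := PresentedGroup.of 0
def B2 : GG p m n1 n2 s1 s2 := PresentedGroup.of 1
def Aa : GG p m n1 n2 s1 s2 := Kc (B2 p m n1 n2 s1 s2) (B1 p m n1 n2 s1 s2)

variable {p m n1 n2 s1 s2}

local notation "b1" => B1 p m n1 n2 s1 s2
local notation "b2" => B2 p m n1 n2 s1 s2
local notation "aa" => Aa p m n1 n2 s1 s2

lemma mk_of (i : Fin 2) :
    PresentedGroup.mk (pgRels p m n1 n2 s1 s2) (FreeGroup.of i) = PresentedGroup.of i := rfl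

lemma mk_aword :
    PresentedGroup.mk (pgRels p m n1 n2 s1 s2)
      ((FreeGroup.of 1)⁻¹ * (FreeGroup.of 0)⁻¹ * FreeGroup.of 1 * FreeGroup.of 0) = aa := by
  simp only [map_mul, map_inv, mk_of]
  rfl

lemma rel1 : aa ^ p ^ m = 1 := by
  have hmem : ((FreeGroup.of 1)⁻¹ * (FreeGroup.of 0)⁻¹ * FreeGroup.of 1 * FreeGroup.of 0 :
      FreeGroup (Fin 2)) ^ p ^ m ∈ pgRels p m n1 n2 s1 s2 := by
    simp [pgRels]
  have := PresentedGroup.mk_rel_eq_one hmem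
  rw [map_pow, mk_aword] at this
  exact this

lemma rel2 : Commute aa b1 := by
  have hmem : ((FreeGroup.of 0)⁻¹ * ((FreeGroup.of 1)⁻¹ * (FreeGroup.of 0)⁻¹ * FreeGroup.of 1 *
      FreeGroup.of 0)⁻¹ * FreeGroup.of 0 * ((FreeGroup.of 1)⁻¹ * (FreeGroup.of 0)⁻¹ *
      FreeGroup.of 1 * FreeGroup.of 0) : FreeGroup (Fin 2)) ∈ pgRels p m n1 n2 s1 s2 := by
    simp [pgRels]
  have := PresentedGroup.mk_rel_eq_one hmem
  simp only [map_mul, map_inv, mk_aword, mk_of] at this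
  have h2 : (b1)⁻¹ * (aa)⁻¹ * b1 * aa = 1 := this
  have h5 : aa * b1 * ((b1)⁻¹ * (aa)⁻¹ * b1 * aa) = aa * b1 := by rw [h2, mul_one]
  have h6 : b1 * aa = aa * b1 := by
    calc b1 * aa = aa * b1 * ((b1)⁻¹ * (aa)⁻¹ * b1 * aa) := by group
      _ = aa * b1 := h5
  exact h6.symm

lemma rel3 : Commute aa b2 := by
  have hmem : ((FreeGroup.of 1)⁻¹ * ((FreeGroup.of 1)⁻¹ * (FreeGroup.of 0)⁻¹ * FreeGroup.of 1 *
      FreeGroup.of 0)⁻¹ * FreeGroup.of 1 * ((FreeGroup.of 1)⁻¹ * (FreeGroup.of 0)⁻¹ *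
      FreeGroup.of 1 * FreeGroup.of 0) : FreeGroup (Fin 2)) ∈ pgRels p m n1 n2 s1 s2 := by
    simp [pgRels]
  have := PresentedGroup.mk_rel_eq_one hmem
  simp only [map_mul, map_inv, mk_aword, mk_of] at this
  have h2 : (b2)⁻¹ * (aa)⁻¹ * b2 * aa = 1 := this
  have h5 : aa * b2 * ((b2)⁻¹ * (aa)⁻¹ * b2 * aa) = aa * b2 := by rw [h2, mul_one]
  have h6 : b2 * aa = aa * b2 := by
    calc b2 * aa = aa * b2 * ((b2)⁻¹ * (aa)⁻¹ * b2 * aa) := by group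
      _ = aa * b2 := h5
  exact h6.symm

lemma rel4 : b1 ^ p ^ n1 = aa ^ p ^ s1 := by
  have hmem : ((FreeGroup.of 0 : FreeGroup (Fin 2)) ^ p ^ n1 *
      (((FreeGroup.of 1)⁻¹ * (FreeGroup.of 0)⁻¹ * FreeGroup.of 1 * FreeGroup.of 0) ^ p ^ s1)⁻¹)
      ∈ pgRels p m n1 n2 s1 s2 := by
    simp [pgRels]
  have := PresentedGroup.mk_rel_eq_one hmem
  simp only [map_mul, map_inv, map_pow, mk_aword, mk_of] at this
  have h2 : (b1) ^ p ^ n1 * ((aa) ^ p ^ s1)⁻¹ = 1 := this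
  exact mul_inv_eq_one.mp h2

lemma rel5 : b2 ^ p ^ n2 = aa ^ p ^ s2 := by
  have hmem : ((FreeGroup.of 1 : FreeGroup (Fin 2)) ^ p ^ n2 *
      (((FreeGroup.of 1)⁻¹ * (FreeGroup.of 0)⁻¹ * FreeGroup.of 1 * FreeGroup.of 0) ^ p ^ s2)⁻¹)
      ∈ pgRels p m n1 n2 s1 s2 := by
    simp [pgRels]
  have := PresentedGroup.mk_rel_eq_one hmem
  simp only [map_mul, map_inv, map_pow, mk_aword, mk_of] at this
  have h2 : (b2) ^ p ^ n2 * ((aa) ^ p ^ s2)⁻¹ = 1 := this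
  exact mul_inv_eq_one.mp h2

lemma acentral : ∀ g : H, Commute aa g := by
  intro g
  have hmem : g ∈ Subgroup.centralizer {aa} := by
    apply PresentedGroup.generated_by
    intro j
    fin_cases j
    · exact Subgroup.mem_centralizer_iff.mpr (by
        intro s hs; rcases hs with rfl; exact rel2)
    · exact Subgroup.mem_centralizer_iff.mpr (by
        intro s hs; rcases hs with rfl; exact rel3)
  have := Subgroup.mem_centralizer_iff.mp hmem aa rfl
  exact this


def f (i j k : ℕ) : GG p m n1 n2 s1 s2 := b1 ^ i * b2 ^ j * aa ^ k

lemma hswH : b2 * b1 = b1 * b2 * aa := swap_eq _ _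

lemma mulf (i j k i' j' k' : ℕ) :
    f (p:=p) (m:=m) (n1:=n1) (n2:=n2) (s1:=s1) (s2:=s2) i j k * f i' j' k'
      = f (i + i') (j + j') (k + k' + j * i') := by
  unfold f
  have hac := acentral (p:=p) (m:=m) (n1:=n1) (n2:=n2) (s1:=s1) (s2:=s2)
  calc b1 ^ i * b2 ^ j * aa ^ k * (b1 ^ i' * b2 ^ j' * aa ^ k')
      = b1 ^ i * b2 ^ j * (aa ^ k * b1 ^ i') * b2 ^ j' * aa ^ k' := by group
    _ = b1 ^ i * b2 ^ j * (b1 ^ i' * aa ^ k) * b2 ^ j' * aa ^ k' := by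
        rw [((hac (b1 ^ i')).pow_left k).eq]
    _ = b1 ^ i * (b2 ^ j * b1 ^ i') * (aa ^ k * b2 ^ j') * aa ^ k' := by group
    _ = b1 ^ i * (b1 ^ i' * b2 ^ j * aa ^ (j * i')) * (b2 ^ j' * aa ^ k) * aa ^ k' := by
        rw [lemC hac (hswH) j i', ((hac (b2 ^ j')).pow_left k).eq]
    _ = b1 ^ i * b1 ^ i' * b2 ^ j * (aa ^ (j * i') * b2 ^ j') * aa ^ k * aa ^ k' := by group
    _ = b1 ^ i * b1 ^ i' * b2 ^ j * (b2 ^ j' * aa ^ (j * i')) * aa ^ k * aa ^ k' := by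
        rw [((hac (b2 ^ j')).pow_left (j * i')).eq]
    _ = b1 ^ (i + i') * b2 ^ (j + j') * aa ^ (k + k' + j * i') := by
        rw [pow_add, pow_add, pow_add, pow_add]; group

lemma fone (i j k : ℕ) (hi : p ^ (n1 + m) ∣ i) (hj : p ^ (n2 + m) ∣ j) (hk : p ^ m ∣ k) :
    f (p:=p) (m:=m) (n1:=n1) (n2:=n2) (s1:=s1) (s2:=s2) i j k = 1 := by
  obtain ⟨qi, rfl⟩ := hi
  obtain ⟨qj, rfl⟩ := hj
  obtain ⟨qk, rfl⟩ := hk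
  unfold f
  have h1 : (b1 : GG p m n1 n2 s1 s2) ^ (p ^ (n1 + m) * qi) = 1 := by
    calc (b1 : GG p m n1 n2 s1 s2) ^ (p ^ (n1 + m) * qi)
        = (b1 ^ p ^ n1) ^ (p ^ m * qi) := by rw [← pow_mul, pow_add, mul_assoc]
      _ = (aa ^ p ^ s1) ^ (p ^ m * qi) := by rw [rel4]
      _ = (aa ^ p ^ m) ^ (p ^ s1 * qi) := by
          rw [← pow_mul, ← pow_mul]; congr 1; ring
      _ = 1 := by rw [rel1, one_pow]
  have h2 : (b2 : GG p m n1 n2 s1 s2) ^ (p ^ (n2 + m) * qj) = 1 := by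
    calc (b2 : GG p m n1 n2 s1 s2) ^ (p ^ (n2 + m) * qj)
        = (b2 ^ p ^ n2) ^ (p ^ m * qj) := by rw [← pow_mul, pow_add, mul_assoc]
      _ = (aa ^ p ^ s2) ^ (p ^ m * qj) := by rw [rel5]
      _ = (aa ^ p ^ m) ^ (p ^ s2 * qj) := by
          rw [← pow_mul, ← pow_mul]; congr 1; ring
      _ = 1 := by rw [rel1, one_pow]
  have h3 : (aa : GG p m n1 n2 s1 s2) ^ (p ^ m * qk) = 1 := by
    rw [pow_mul, rel1, one_pow]
  rw [h1, h2, h3, one_mul, one_mul]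

lemma red1 (i j k : ℕ) :
    f (p:=p) (m:=m) (n1:=n1) (n2:=n2) (s1:=s1) (s2:=s2) i j k
      = f (i % p ^ n1) j (k + p ^ s1 * (i / p ^ n1)) := by
  unfold f
  have hac := acentral (p:=p) (m:=m) (n1:=n1) (n2:=n2) (s1:=s1) (s2:=s2)
  have h1 : (b1 : GG p m n1 n2 s1 s2) ^ i
      = b1 ^ (i % p ^ n1) * aa ^ (p ^ s1 * (i / p ^ n1)) := by
    conv_lhs => rw [← Nat.mod_add_div i (p ^ n1)]
    rw [pow_add, pow_mul, rel4, ← pow_mul]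
  rw [h1]
  rw [mul_assoc (b1 ^ (i % p ^ n1)), ((hac (b2 ^ j)).pow_left (p ^ s1 * (i / p ^ n1))).eq]
  rw [pow_add]
  group

lemma red2 (i j k : ℕ) :
    f (p:=p) (m:=m) (n1:=n1) (n2:=n2) (s1:=s1) (s2:=s2) i j k
      = f i (j % p ^ n2) (k + p ^ s2 * (j / p ^ n2)) := by
  unfold f
  have h1 : (b2 : GG p m n1 n2 s1 s2) ^ j
      = b2 ^ (j % p ^ n2) * aa ^ (p ^ s2 * (j / p ^ n2)) := by
    conv_lhs => rw [← Nat.mod_add_div j (p ^ n2)]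
    rw [pow_add, pow_mul, rel5, ← pow_mul]
  rw [h1, pow_add]
  group

lemma red3 (i j k : ℕ) :
    f (p:=p) (m:=m) (n1:=n1) (n2:=n2) (s1:=s1) (s2:=s2) i j k = f i j (k % p ^ m) := by
  unfold f
  have h1 : (aa : GG p m n1 n2 s1 s2) ^ k = aa ^ (k % p ^ m) := by
    conv_lhs => rw [← Nat.mod_add_div k (p ^ m)]
    rw [pow_add, pow_mul, rel1, one_pow, mul_one]
  rw [h1]

variable (hp : 0 < p)
include hp

lemma red (i j k : ℕ) : ∃ i' j' k', i' < p ^ n1 ∧ j' < p ^ n2 ∧ k' < p ^ m ∧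
    f (p:=p) (m:=m) (n1:=n1) (n2:=n2) (s1:=s1) (s2:=s2) i j k = f i' j' k' := by
  refine ⟨i % p ^ n1, j % p ^ n2, (k + p ^ s1 * (i / p ^ n1) + p ^ s2 * (j / p ^ n2))
    % p ^ m, ?_, ?_, ?_, ?_⟩
  · exact Nat.mod_lt _ (pow_pos hp n1)
  · exact Nat.mod_lt _ (pow_pos hp n2)
  · exact Nat.mod_lt _ (pow_pos hp m)
  · rw [red1, red2, red3]

lemma finv (i j k : ℕ) : ∃ i' j' k',
    f (p:=p) (m:=m) (n1:=n1) (n2:=n2) (s1:=s1) (s2:=s2) i j k * f i' j' k' = 1 := by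
  set P1 := p ^ (n1 + m) with hP1
  set P2 := p ^ (n2 + m) with hP2
  set P3 := p ^ m with hP3
  have hP1p : 0 < P1 := pow_pos hp _
  have hP2p : 0 < P2 := pow_pos hp _
  have hP3p : 0 < P3 := pow_pos hp _
  set i' := P1 * (i / P1 + 1) - i with hi'
  set j' := P2 * (j / P2 + 1) - j with hj'
  have hii : i + i' = P1 * (i / P1 + 1) := by
    have := Nat.div_add_mod i P1
    have hmul : P1 * (i / P1 + 1) = P1 * (i / P1) + P1 := by ring
    have h2 : i ≤ P1 * (i / P1 + 1) := by
      have := Nat.mod_lt i hP1p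
      omega
    omega
  have hjj : j + j' = P2 * (j / P2 + 1) := by
    have := Nat.div_add_mod j P2
    have hmul : P2 * (j / P2 + 1) = P2 * (j / P2) + P2 := by ring
    have h2 : j ≤ P2 * (j / P2 + 1) := by
      have := Nat.mod_lt j hP2p
      omega
    omega
  set K := k + j * i' with hK
  set k' := P3 * (K / P3 + 1) - K with hk'
  have hkk : K + k' = P3 * (K / P3 + 1) := by
    have := Nat.div_add_mod K P3
    have hmul : P3 * (K / P3 + 1) = P3 * (K / P3) + P3 := by ring
    have h2 : K ≤ P3 * (K / P3 + 1) := by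
      have := Nat.mod_lt K hP3p
      omega
    omega
  refine ⟨i', j', k', ?_⟩
  rw [mulf]
  have hkeq : k + k' + j * i' = P3 * (K / P3 + 1) := by omega
  rw [hkeq]
  apply fone
  · rw [hii]; exact Dvd.intro _ rfl
  · rw [hjj]; exact Dvd.intro _ rfl
  · exact Dvd.intro _ rfl

lemma surjf (g : GG p m n1 n2 s1 s2) : ∃ i j k, i < p ^ n1 ∧ j < p ^ n2 ∧ k < p ^ m ∧
    g = f (p:=p) (m:=m) (n1:=n1) (n2:=n2) (s1:=s1) (s2:=s2) i j k := by
  let SS : Subgroup (GG p m n1 n2 s1 s2) :=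
    { carrier := {g | ∃ i j k, i < p ^ n1 ∧ j < p ^ n2 ∧ k < p ^ m ∧ g = f i j k}
      one_mem' := by
        obtain ⟨i', j', k', h1, h2, h3, h4⟩ := red (p:=p) (m:=m) (n1:=n1) (n2:=n2)
          (s1:=s1) (s2:=s2) hp 0 0 0
        refine ⟨i', j', k', h1, h2, h3, ?_⟩
        rw [← h4]
        unfold f; simp
      mul_mem' := by
        rintro a b ⟨i, j, k, _, _, _, rfl⟩ ⟨i2, j2, k2, _, _, _, rfl⟩
        rw [mulf]
        obtain ⟨i', j', k', h1, h2, h3, h4⟩ := red (p:=p) (m:=m) (n1:=n1) (n2:=n2)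
          (s1:=s1) (s2:=s2) hp (i + i2) (j + j2) (k + k2 + j * i2)
        exact ⟨i', j', k', h1, h2, h3, h4⟩
      inv_mem' := by
        rintro a ⟨i, j, k, _, _, _, rfl⟩
        obtain ⟨i2, j2, k2, hone⟩ := finv (p:=p) (m:=m) (n1:=n1) (n2:=n2)
          (s1:=s1) (s2:=s2) hp i j k
        obtain ⟨i', j', k', h1, h2, h3, h4⟩ := red (p:=p) (m:=m) (n1:=n1) (n2:=n2)
          (s1:=s1) (s2:=s2) hp i2 j2 k2
        refine ⟨i', j', k', h1, h2, h3, ?_⟩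
        rw [← h4]
        exact inv_eq_of_mul_eq_one_right hone }
  have hmem : g ∈ SS := by
    apply PresentedGroup.generated_by
    intro jj
    fin_cases jj
    · show ∃ i j k, _ ∧ _ ∧ _ ∧ (PresentedGroup.of 0 : GG p m n1 n2 s1 s2) = f i j k
      obtain ⟨i', j', k', h1, h2, h3, h4⟩ := red (p:=p) (m:=m) (n1:=n1) (n2:=n2)
        (s1:=s1) (s2:=s2) hp 1 0 0
      refine ⟨i', j', k', h1, h2, h3, ?_⟩
      rw [← h4]
      unfold f
      show b1 = _
      simp
    · show ∃ i j k, _ ∧ _ ∧ _ ∧ (PresentedGroup.of 1 : GG p m n1 n2 s1 s2) = f i j k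
      obtain ⟨i', j', k', h1, h2, h3, h4⟩ := red (p:=p) (m:=m) (n1:=n1) (n2:=n2)
        (s1:=s1) (s2:=s2) hp 0 1 0
      refine ⟨i', j', k', h1, h2, h3, ?_⟩
      rw [← h4]
      unfold f
      show b2 = _
      simp
  exact hmem

lemma GG_finite_card : Finite (GG p m n1 n2 s1 s2) ∧
    Nat.card (GG p m n1 n2 s1 s2) ≤ p ^ n1 * p ^ n2 * p ^ m := by
  let F : Fin (p ^ n1) × Fin (p ^ n2) × Fin (p ^ m) → GG p m n1 n2 s1 s2 :=
    fun t => f t.1 t.2.1 t.2.2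
  have hF : Function.Surjective F := by
    intro g
    obtain ⟨i, j, k, h1, h2, h3, h4⟩ := surjf (p:=p) (m:=m) (n1:=n1) (n2:=n2)
      (s1:=s1) (s2:=s2) hp g
    exact ⟨(⟨i, h1⟩, ⟨j, h2⟩, ⟨k, h3⟩), h4.symm⟩
  have hfin : Finite (GG p m n1 n2 s1 s2) := Finite.of_surjective F hF
  refine ⟨hfin, ?_⟩
  have := Nat.card_le_card_of_surjective F hF
  simpa [mul_assoc] using this

end GGaux
end GGside

/-! ### number theory helpers -/

lemma exists_rep (p m A : ℕ) (hp : p.Prime) :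
    ∃ s u : ℕ, s ≤ m ∧ ¬ p ∣ u ∧ A ≡ u * p ^ s [MOD p ^ m] := by
  set P := p ^ m with hP
  have hPpos : 0 < P := pow_pos hp.pos m
  set n := A % P with hn
  have hAn : A ≡ n [MOD P] := (Nat.mod_modEq A P).symm
  by_cases h0 : n = 0
  · refine ⟨m, 1, le_refl m, hp.one_lt.ne' ∘ (Nat.dvd_one.mp ·), ?_⟩
    rw [one_mul]
    calc A ≡ n [MOD P] := hAn
      _ ≡ p ^ m [MOD P] := by
          rw [h0]
          exact (Nat.modEq_zero_iff_dvd.mpr (dvd_refl P)).symm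
  · set s := n.factorization p with hs
    set u := n / p ^ s with hu
    have hsu : p ^ s * u = n := Nat.ordProj_mul_ordCompl_eq_self n p
    have hup : ¬ p ∣ u := Nat.not_dvd_ordCompl hp h0
    have hslt : s ≤ m := by
      by_contra hgt
      have h1 : p ^ m ∣ p ^ s := pow_dvd_pow p (by omega)
      have h2 : p ^ s ∣ n := Dvd.intro u hsu
      have := Nat.le_of_dvd (Nat.pos_of_ne_zero h0) (h1.trans h2)
      have := Nat.mod_lt A hPpos
      omega
    exact ⟨s, u, hslt, hup, by rw [mul_comm u]; exact hsu ▸ hAn⟩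

lemma rep_add {p a b u w : ℕ} (hab : a ≤ b) :
    u * p ^ a + w * p ^ b = (u + w * p ^ (b - a)) * p ^ a := by
  have : p ^ b = p ^ (b - a) * p ^ a := by rw [← pow_add]; congr 1; omega
  rw [this]; ring

lemma not_dvd_add_mul_pow {p u w e : ℕ} (hu : ¬ p ∣ u) (he : 1 ≤ e) :
    ¬ p ∣ (u + w * p ^ e) := by
  intro h
  apply hu
  have h2 : p ∣ w * p ^ e := Dvd.dvd.mul_left (dvd_pow_self p (by omega)) w
  exact (Nat.dvd_add_right h2).mp (by rwa [Nat.add_comm] at h)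

lemma two_mul_pow_choose (p n d : ℕ) (hn : 1 ≤ n) :
    2 * (p ^ d * (p ^ n).choose 2) = p ^ (d + n) * (p ^ n - 1) := by
  have hev : 2 ∣ p ^ n * (p ^ n - 1) := by
    rcases Nat.even_or_odd (p ^ n) with h | h
    · exact Dvd.dvd.mul_right h.two_dvd _
    · have : Even (p ^ n - 1) := by
        rcases h with ⟨k, hk⟩
        exact ⟨k, by omega⟩
      exact Dvd.dvd.mul_left this.two_dvd _
  have hch : (p ^ n).choose 2 = p ^ n * (p ^ n - 1) / 2 := Nat.choose_two_right _
  rw [hch, pow_add, mul_comm 2 (p ^ d * (p ^ n * (p ^ n - 1) / 2)), mul_assoc,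
    Nat.div_mul_cancel hev, mul_assoc]

lemma E_dvd_odd {p m n d : ℕ} (hp : p.Prime) (hodd : p ≠ 2) (hn : 1 ≤ n) (hm : m ≤ d + n) :
    p ^ m ∣ p ^ d * (p ^ n).choose 2 := by
  have h2 := two_mul_pow_choose p n d hn
  have hcop : Nat.Coprime (p ^ m) 2 := by
    apply Nat.Coprime.pow_left
    rw [Nat.coprime_primes hp Nat.prime_two] at *
    · exact hodd
  apply hcop.dvd_of_dvd_mul_left
  rw [mul_comm 2 _] at h2 ⊢
  rw [h2]
  exact Dvd.dvd.mul_right (pow_dvd_pow p hm) _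

lemma E_dvd_two {m n d : ℕ} (hn : 1 ≤ n) (hm : m < d + n) :
    2 ^ m ∣ 2 ^ d * (2 ^ n).choose 2 := by
  have h2 := two_mul_pow_choose 2 n d hn
  have h3 : 2 ^ d * (2 ^ n).choose 2 = 2 ^ (d + n - 1) * (2 ^ n - 1) := by
    have h4 : 2 * (2 ^ (d + n - 1) * (2 ^ n - 1)) = 2 ^ (d + n) * (2 ^ n - 1) := by
      rw [← mul_assoc, ← pow_succ']
      congr 2
      omega
    omega
  rw [h3]
  exact Dvd.dvd.mul_right (pow_dvd_pow 2 (by omega)) _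

lemma E_exceptional {m d n : ℕ} (hm : 1 ≤ m) (hdn : d + n = m) (hn : 1 ≤ n) :
    2 ^ d * (2 ^ n).choose 2 ≡ 2 ^ (m - 1) [MOD 2 ^ m] := by
  have h2 := two_mul_pow_choose 2 n d hn
  have h3 : 2 ^ d * (2 ^ n).choose 2 = 2 ^ (m - 1) * (2 ^ n - 1) := by
    have h4 : 2 * (2 ^ (m - 1) * (2 ^ n - 1)) = 2 ^ m * (2 ^ n - 1) := by
      rw [← mul_assoc, ← pow_succ']
      congr 2
      omega
    rw [hdn] at h2
    omega
  rw [h3]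
  -- 2^(m-1) * (2^n - 1) ≡ 2^(m-1) mod 2^m
  have key : 2 ^ (m - 1) * (2 ^ n - 1) + 2 ^ (m - 1) = 2 ^ (m - 1) * 2 ^ n := by
    have h1 : 1 ≤ 2 ^ n := Nat.one_le_two_pow
    calc 2 ^ (m - 1) * (2 ^ n - 1) + 2 ^ (m - 1) = 2 ^ (m - 1) * (2 ^ n - 1 + 1) := by ring
      _ = 2 ^ (m - 1) * 2 ^ n := by rw [Nat.sub_add_cancel h1]
  have hdvd : (2 ^ m : ℕ) ∣ 2 ^ (m - 1) * 2 ^ n := by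
    rw [← pow_add]
    exact pow_dvd_pow 2 (by omega)
  have e1 : (2 ^ (m-1) * (2 ^ n - 1) + 2 ^ (m-1)) ≡ 0 [MOD 2 ^ m] := by
    rw [key]
    exact (Nat.modEq_zero_iff_dvd).mpr hdvd
  have e2 : (2 ^ (m-1) + 2 ^ (m-1) : ℕ) ≡ 0 [MOD 2 ^ m] := by
    apply (Nat.modEq_zero_iff_dvd).mpr
    have h6 : 2 ^ (m-1) + 2 ^ (m-1) = 2 ^ m := by
      rw [← two_mul, ← pow_succ']
      congr 1
      omega
    rw [h6]
  exact Nat.ModEq.add_right_cancel' _ (e1.trans e2.symm)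

lemma half_pow_mul_odd {m : ℕ} (hm1 : 1 ≤ m) :
    2 ^ (m - 1) * (2 ^ m - 1) ≡ 2 ^ (m - 1) [MOD 2 ^ m] := by
  have h1 : 1 ≤ 2 ^ m := Nat.one_le_two_pow
  have key : 2 ^ (m - 1) * (2 ^ m - 1) + 2 ^ (m - 1) = 2 ^ (m - 1) * 2 ^ m := by
    calc 2 ^ (m - 1) * (2 ^ m - 1) + 2 ^ (m - 1) = 2 ^ (m - 1) * (2 ^ m - 1 + 1) := by ring
      _ = 2 ^ (m - 1) * 2 ^ m := by rw [Nat.sub_add_cancel h1]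
  have e1 : (2 ^ (m-1) * (2 ^ m - 1) + 2 ^ (m-1)) ≡ 0 [MOD 2 ^ m] := by
    rw [key]
    apply (Nat.modEq_zero_iff_dvd).mpr
    rw [← pow_add]
    exact pow_dvd_pow 2 (by omega)
  have e2 : (2 ^ (m-1) + 2 ^ (m-1) : ℕ) ≡ 0 [MOD 2 ^ m] := by
    apply (Nat.modEq_zero_iff_dvd).mpr
    have h6 : 2 ^ (m-1) + 2 ^ (m-1) = 2 ^ m := by
      rw [← two_mul, ← pow_succ']
      congr 1
      omega
    rw [h6]
  exact Nat.ModEq.add_right_cancel' _ (e1.trans e2.symm)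

lemma ordKc {G : Type*} [Group G] {p m : ℕ} (hcl : commutator G ≤ Subgroup.center G)
    (hm : Nat.card (commutator G) = p ^ m) {x y : G}
    (hgen : Subgroup.closure {x, y} = ⊤) : orderOf (Kc y x) = p ^ m := by
  have h : Subgroup.closure {x, y} ⊔ commutator G = ⊤ := by rw [hgen]; exact top_sup_eq _
  obtain ⟨hcz, -⟩ := commutator_eq_zpowers hcl x y h
  rw [← Nat.card_zpowers, ← hcz]
  exact hm

/-! ### closure helpers -/

section ClosureHelpers
variable {G : Type*} [Group G]

lemma closure_pair_mulpow {x y : G} (hgen : Subgroup.closure {x, y} = ⊤) (s : ℕ) :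
    Subgroup.closure {x, y * x ^ s} = ⊤ := by
  rw [eq_top_iff, ← hgen, Subgroup.closure_le]
  intro z hz
  have hx : x ∈ Subgroup.closure ({x, y * x ^ s} : Set G) :=
    Subgroup.subset_closure (Set.mem_insert _ _)
  have hyx : y * x ^ s ∈ Subgroup.closure ({x, y * x ^ s} : Set G) :=
    Subgroup.subset_closure (Set.mem_insert_of_mem _ rfl)
  rcases hz with rfl | hz
  · exact hx
  · rcases hz with rfl
    have h2 := mul_mem hyx (inv_mem (pow_mem hx s))
    simpa using h2

lemma closure_pair_mulright {x y : G} (hgen : Subgroup.closure {x, y} = ⊤) :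
    Subgroup.closure {x * y, y} = ⊤ := by
  rw [eq_top_iff, ← hgen, Subgroup.closure_le]
  intro z hz
  have hxy : x * y ∈ Subgroup.closure ({x * y, y} : Set G) :=
    Subgroup.subset_closure (Set.mem_insert _ _)
  have hy : y ∈ Subgroup.closure ({x * y, y} : Set G) :=
    Subgroup.subset_closure (Set.mem_insert_of_mem _ rfl)
  rcases hz with rfl | hz
  · have h2 := mul_mem hxy (inv_mem hy)
    simpa using h2
  · rcases hz with rfl
    exact hy

lemma closure_pair_comm {x y : G} (hgen : Subgroup.closure {x, y} = ⊤) :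
    Subgroup.closure {y, x} = ⊤ := by rwa [Set.pair_comm]

lemma mem_closure_pow {y : G} {u : ℕ} (hcop : Nat.Coprime u (orderOf y)) (hord : 0 < orderOf y) :
    y ∈ Subgroup.zpowers (y ^ u) := by
  rcases Nat.lt_or_ge 1 (orderOf y) with h1 | h1
  case inr =>
    have : orderOf y = 1 := by omega
    have : y = 1 := orderOf_eq_one_iff.mp this
    rw [this]
    exact one_mem _
  case inl =>
    obtain ⟨v, hv⟩ := Nat.exists_mul_mod_eq_one_of_coprime hcop h1
    have : (y ^ u) ^ v = y := by
      have e1 : (y ^ u) ^ v = y ^ (u * v) := (pow_mul y u v).symm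
      have e2 : y ^ (u * v) = y ^ 1 := by
        apply pow_eq_pow_iff_modEq.mpr
        show u * v % orderOf y = 1 % orderOf y
        rw [hv.2]
        exact (Nat.mod_eq_of_lt h1).symm
      rw [e1, e2, pow_one]
    have h3 : (y ^ u) ^ v ∈ Subgroup.zpowers (y ^ u) :=
      pow_mem (Subgroup.mem_zpowers _) v
    rwa [this] at h3

lemma closure_pair_powers {x y : G} (hgen : Subgroup.closure {x, y} = ⊤) {u w : ℕ}
    (hcu : Nat.Coprime u (orderOf y)) (hcw : Nat.Coprime w (orderOf x))
    (hox : 0 < orderOf x) (hoy : 0 < orderOf y) :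
    Subgroup.closure {x ^ w, y ^ u} = ⊤ := by
  rw [eq_top_iff, ← hgen, Subgroup.closure_le]
  intro z hz
  have hx : x ^ w ∈ Subgroup.closure ({x ^ w, y ^ u} : Set G) :=
    Subgroup.subset_closure (Set.mem_insert _ _)
  have hy : y ^ u ∈ Subgroup.closure ({x ^ w, y ^ u} : Set G) :=
    Subgroup.subset_closure (Set.mem_insert_of_mem _ rfl)
  rcases hz with rfl | hz
  · have h1 : z ∈ Subgroup.zpowers (z ^ w) := mem_closure_pow hcw hox
    have h2 : Subgroup.zpowers (z ^ w) ≤ Subgroup.closure ({z ^ w, y ^ u} : Set G) := by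
      rw [Subgroup.zpowers_le]; exact hx
    exact h2 h1
  · rcases hz with rfl
    have h1 : z ∈ Subgroup.zpowers (z ^ u) := mem_closure_pow hcu hoy
    have h2 : Subgroup.zpowers (z ^ u) ≤ Subgroup.closure ({x ^ w, z ^ u} : Set G) := by
      rw [Subgroup.zpowers_le]; exact hy
    exact h2 h1

end ClosureHelpers

/-! ### the moves -/

section Moves
variable {G : Type*} [Group G] (hcl : commutator G ≤ Subgroup.center G)
variable {p m n1 n2 : ℕ}

include hcl

/-- Move 3 : `y ↦ y * x ^ p^(n1-n2)`. -/
lemma move3 {x y : G} {A B : ℕ} (hn : n2 ≤ n1) (hppos : 0 < p)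
    (hA : x ^ p ^ n1 = Kc y x ^ A) (hB : y ^ p ^ n2 = Kc y x ^ B)
    (hord : Kc y x ^ p ^ m = 1) :
    Kc (y * x ^ p ^ (n1 - n2)) x = Kc y x ∧
    (y * x ^ p ^ (n1 - n2)) ^ p ^ n2
      = Kc y x ^ (B + A + (p ^ (n1 - n2) * (p ^ n2).choose 2) * (p ^ m - 1)) := by
  set c := Kc y x with hc0
  have hc : ∀ g : G, Commute c g := fun g => Kc_commute hcl y x g
  have hsw : y * x = x * y * c := swap_eq y x
  set s := p ^ (n1 - n2) with hs
  have hsw' : x ^ s * y = y * x ^ s * c ^ (s * (p ^ m - 1)) := by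
    have e1 : y * x ^ s = x ^ s * y * c ^ s := lemA hc hsw s
    have e2 : c ^ s * c ^ (s * (p ^ m - 1)) = 1 := by
      rw [← pow_add]
      have e3 : s + s * (p ^ m - 1) = p ^ m * s := by
        obtain ⟨t, ht⟩ : ∃ t, p ^ m = t + 1 := ⟨p ^ m - 1, by
          have := Nat.one_le_pow m p hppos; omega⟩
        rw [ht, Nat.add_sub_cancel]
        ring
      rw [e3, pow_mul, hord, one_pow]
    calc x ^ s * y = (y * x ^ s * (c ^ s)⁻¹) := by rw [e1]; group
      _ = y * x ^ s * c ^ (s * (p ^ m - 1)) := by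
          congr 1
          exact inv_eq_of_mul_eq_one_right e2
  have hceq : Kc (y * x ^ s) x = c := by
    apply Kc_eq_of_swap
    have e1 : y * x ^ s * x = y * x ^ (s + 1) := by rw [pow_succ]; group
    have e2 : x * (y * x ^ s) * c = x ^ (s + 1) * y * c ^ (s + 1) := by
      rw [lemA hc hsw s, pow_succ, pow_succ]
      have := (hc x).pow_left s
      group
    rw [e1, e2, lemA hc hsw (s + 1)]
  constructor
  · exact hceq
  · have hP3 := lemP3 (x := y) (y := x ^ s) (c := c ^ (s * (p ^ m - 1)))
      (fun g => (hc g).pow_left _) hsw' (p ^ n2)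
    rw [hP3, hB, ← pow_mul, ← pow_mul]
    have e4 : s * p ^ n2 = p ^ n1 := by
      rw [hs, ← pow_add]
      congr 1
      omega
    rw [e4, hA, ← pow_add, ← pow_add]
    congr 1
    ring

/-- Move 4 : `x ↦ x * y`. -/
lemma move4 {x y : G} {A B : ℕ} (hn : n2 ≤ n1)
    (hA : x ^ p ^ n1 = Kc y x ^ A) (hB : y ^ p ^ n2 = Kc y x ^ B) :
    Kc y (x * y) = Kc y x ∧
    (x * y) ^ p ^ n1
      = Kc y x ^ (A + B * p ^ (n1 - n2) + (p ^ n1).choose 2) ∧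
    y ^ p ^ n2 = Kc y (x * y) ^ B := by
  set c := Kc y x with hc0
  have hc : ∀ g : G, Commute c g := fun g => Kc_commute hcl y x g
  have hsw : y * x = x * y * c := swap_eq y x
  have hceq : Kc y (x * y) = c := by
    apply Kc_eq_of_swap
    calc y * (x * y) = (y * x) * y := by group
      _ = x * y * c * y := by rw [hsw]
      _ = x * y * (c * y) := by group
      _ = x * y * (y * c) := by rw [(hc y).eq]
      _ = (x * y) * y * c := by group
  refine ⟨hceq, ?_, by rw [hceq]; exact hB⟩
  have hP3 := lemP3 hc hsw (p ^ n1)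
  rw [hP3, hA]
  have e1 : y ^ p ^ n1 = c ^ (B * p ^ (n1 - n2)) := by
    have e2 : p ^ n1 = p ^ n2 * p ^ (n1 - n2) := by
      rw [← pow_add]
      congr 1
      omega
    rw [e2, pow_mul, hB, ← pow_mul]
  rw [e1, ← pow_add, ← pow_add]

/-- Move 5 : swap `x` and `y` (needs `n1 = n2`). -/
lemma move5 {x y : G} {A B : ℕ} (hnn : n1 = n2) (hppos : 0 < p)
    (hA : x ^ p ^ n1 = Kc y x ^ A) (hB : y ^ p ^ n2 = Kc y x ^ B)
    (hord : Kc y x ^ p ^ m = 1) :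
    y ^ p ^ n1 = Kc x y ^ (B * (p ^ m - 1)) ∧
    x ^ p ^ n2 = Kc x y ^ (A * (p ^ m - 1)) := by
  set c := Kc y x with hc0
  have hinv : Kc x y = c⁻¹ := by rw [hc0, ← Kc_inv_rel]
  have key : ∀ D : ℕ, c ^ D = Kc x y ^ (D * (p ^ m - 1)) := by
    intro D
    rw [hinv, inv_pow]
    have e2 : c ^ D * c ^ (D * (p ^ m - 1)) = 1 := by
      rw [← pow_add]
      obtain ⟨t, ht⟩ : ∃ t, p ^ m = t + 1 := ⟨p ^ m - 1, by
        have := Nat.one_le_pow m p hppos; omega⟩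
      have e3 : D + D * (p ^ m - 1) = p ^ m * D := by
        rw [ht, Nat.add_sub_cancel]; ring
      rw [e3, pow_mul, hord, one_pow]
    exact (inv_eq_of_mul_eq_one_left e2).symm
  constructor
  · rw [hnn, hB, key]
  · rw [← hnn, hA, key]

/-- Final move : remove the units, `x ↦ x^w`, `y ↦ y^u`. -/
lemma finalize {x y : G} {A B u w s1 s2 : ℕ} (hp : p.Prime)
    (hgen : Subgroup.closure {x, y} = ⊤)
    (hordc : orderOf (Kc y x) = p ^ m)
    (hA : x ^ p ^ n1 = Kc y x ^ A) (hB : y ^ p ^ n2 = Kc y x ^ B)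
    (hu : ¬ p ∣ u) (hw : ¬ p ∣ w)
    (hA' : A ≡ u * p ^ s1 [MOD p ^ m]) (hB' : B ≡ w * p ^ s2 [MOD p ^ m]) :
    ∃ x' y' : G, Subgroup.closure {x', y'} = ⊤ ∧
      x' ^ p ^ n1 = Kc y' x' ^ p ^ s1 ∧ y' ^ p ^ n2 = Kc y' x' ^ p ^ s2 := by
  set c := Kc y x with hc0
  have hc : ∀ g : G, Commute c g := fun g => Kc_commute hcl y x g
  have hsw : y * x = x * y * c := swap_eq y x
  have hcpow : ∀ D E : ℕ, D ≡ E [MOD p ^ m] → c ^ D = c ^ E := by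
    intro D E h
    apply pow_eq_pow_iff_modEq.mpr
    rw [hordc]
    exact h
  have hcm : c ^ p ^ m = 1 := by rw [← hordc]; exact pow_orderOf_eq_one c
  have hKc' : Kc (y ^ u) (x ^ w) = c ^ (u * w) := Kc_eq_of_swap (lemC hc hsw u w)
  refine ⟨x ^ w, y ^ u, ?_, ?_, ?_⟩
  · -- generation
    have hxord : orderOf x ∣ p ^ (n1 + m) := by
      apply orderOf_dvd_of_pow_eq_one
      rw [pow_add, pow_mul, hA, ← pow_mul, mul_comm A, pow_mul, hcm, one_pow]
    have hyord : orderOf y ∣ p ^ (n2 + m) := by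
      apply orderOf_dvd_of_pow_eq_one
      rw [pow_add, pow_mul, hB, ← pow_mul, mul_comm B, pow_mul, hcm, one_pow]
    have hcu : Nat.Coprime u (orderOf y) :=
      Nat.Coprime.coprime_dvd_right hyord
        (Nat.Coprime.pow_right _ ((Nat.Prime.coprime_iff_not_dvd hp).mpr hu).symm)
    have hcw : Nat.Coprime w (orderOf x) :=
      Nat.Coprime.coprime_dvd_right hxord
        (Nat.Coprime.pow_right _ ((Nat.Prime.coprime_iff_not_dvd hp).mpr hw).symm)
    have hox : 0 < orderOf x := by
      rcases Nat.eq_zero_or_pos (orderOf x) with h | h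
      · rw [h] at hxord
        have := zero_dvd_iff.mp hxord
        exact absurd this (pow_pos hp.pos _).ne'
      · exact h
    have hoy : 0 < orderOf y := by
      rcases Nat.eq_zero_or_pos (orderOf y) with h | h
      · rw [h] at hyord
        have := zero_dvd_iff.mp hyord
        exact absurd this (pow_pos hp.pos _).ne'
      · exact h
    exact closure_pair_powers hgen hcu hcw hox hoy
  · rw [hKc']
    calc (x ^ w) ^ p ^ n1 = (x ^ p ^ n1) ^ w := by
          rw [← pow_mul, ← pow_mul, mul_comm]
      _ = c ^ (A * w) := by rw [hA, ← pow_mul]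
      _ = c ^ (u * w * p ^ s1) := by
          apply hcpow
          have h1 : A * w ≡ u * p ^ s1 * w [MOD p ^ m] := hA'.mul_right w
          have h2 : u * p ^ s1 * w = u * w * p ^ s1 := by ring
          rw [← h2]
          exact h1
      _ = (c ^ (u * w)) ^ p ^ s1 := by rw [← pow_mul]
  · rw [hKc']
    calc (y ^ u) ^ p ^ n2 = (y ^ p ^ n2) ^ u := by
          rw [← pow_mul, ← pow_mul, mul_comm]
      _ = c ^ (B * u) := by rw [hB, ← pow_mul]
      _ = c ^ (u * w * p ^ s2) := by
          apply hcpow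
          have h1 : B * u ≡ w * p ^ s2 * u [MOD p ^ m] := hB'.mul_right u
          have h2 : w * p ^ s2 * u = u * w * p ^ s2 := by ring
          rw [← h2]
          exact h1
      _ = (c ^ (u * w)) ^ p ^ s2 := by rw [← pow_mul]

end Moves

section Normalize
variable {G : Type*} [Group G] {p m n1 n2 : ℕ}

/-- The exceptional regime `p = 2`, `n1 = n2 = m`, assuming `a ≤ b`. -/
lemma regimeE (hp : p.Prime) (hcl : commutator G ≤ Subgroup.center G)
    (hm : Nat.card (commutator G) = p ^ m) (hm1 : 1 ≤ m) (hp2 : p = 2)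
    {x y : G} {A B a b u w : ℕ}
    (hgen : Subgroup.closure {x, y} = ⊤)
    (hA : x ^ p ^ m = Kc y x ^ A) (hB : y ^ p ^ m = Kc y x ^ B)
    (ha : a ≤ m) (hb : b ≤ m) (hu : ¬ p ∣ u) (hw : ¬ p ∣ w)
    (hAr : A ≡ u * p ^ a [MOD p ^ m]) (hBr : B ≡ w * p ^ b [MOD p ^ m])
    (hab : a ≤ b) :
    ∃ (s1 s2 : ℕ) (x' y' : G), Admissible p m m m s1 s2 ∧
      Subgroup.closure {x', y'} = ⊤ ∧
      x' ^ p ^ m = Kc y' x' ^ p ^ s1 ∧ y' ^ p ^ m = Kc y' x' ^ p ^ s2 := by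
  have hordc := ordKc hcl hm hgen
  have hppos : 0 < p := hp.pos
  subst hp2
  have hE3 : (2:ℕ) ^ (m - m) * (2 ^ m).choose 2 ≡ 2 ^ (m - 1) [MOD 2 ^ m] := by
    have := E_exceptional (d := m - m) (n := m) hm1 (by omega) hm1
    simpa using this
  have hEfac : ((2:ℕ) ^ (m - m) * (2 ^ m).choose 2) * (2 ^ m - 1) ≡ 2 ^ (m - 1) [MOD 2 ^ m] :=
    (hE3.mul_right _).trans (half_pow_mul_odd hm1)
  by_cases hcase1 : a = b ∧ a < m
  · -- done directly
    obtain ⟨rfl, haltm⟩ := hcase1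
    obtain ⟨x', y', hg', h1', h2'⟩ := finalize hcl hp hgen hordc hA hB hu hw hAr hBr
    refine ⟨a, a, x', y', ?_, hg', h1', h2'⟩
    exact ⟨⟨hm1, ha, ha, le_refl m, le_refl m⟩, by omega, fun _ => by omega, Or.inl (le_refl a)⟩
  · by_cases hcase2 : a < b ∧ a + 2 ≤ m
    · -- move3, then done with s1 = s2 = a
      obtain ⟨haltb, ham2⟩ := hcase2
      obtain ⟨hceq, hB2⟩ := move3 (n1 := m) (n2 := m) hcl (le_refl m) hppos hA hB
        (by rw [← hordc]; exact pow_orderOf_eq_one _)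
      set y' := y * x ^ 2 ^ (m - m) with hy'
      have hgen' : Subgroup.closure {x, y'} = ⊤ := closure_pair_mulpow hgen _
      have hordc' := ordKc hcl hm hgen'
      have hA' : x ^ 2 ^ m = Kc y' x ^ A := by rw [hceq]; exact hA
      have hB' : y' ^ 2 ^ m = Kc y' x ^ (B + A + 2 ^ (m-m) * (2^m).choose 2 * (2 ^ m - 1)) := by
        rw [hceq]; exact hB2
      -- new rep for B2
      set u2 := u + w * 2 ^ (b - a) + 2 ^ (m - 1 - a) with hu2
      have hrep : B + A + 2 ^ (m-m) * (2^m).choose 2 * (2 ^ m - 1) ≡ u2 * 2 ^ a [MOD 2 ^ m] := by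
        have h1 : B + A + 2 ^ (m-m) * (2^m).choose 2 * (2 ^ m - 1)
            ≡ w * 2 ^ b + u * 2 ^ a + 1 * 2 ^ (m - 1) [MOD 2 ^ m] := by
          have := (hBr.add hAr).add hEfac
          simpa using this
        have e0 : u2 = (u + w * 2 ^ (b - a)) + 1 * 2 ^ (m - 1 - a) := by rw [hu2]; ring
        have e1 : u * 2 ^ a + w * 2 ^ b = (u + w * 2 ^ (b - a)) * 2 ^ a :=
          rep_add (le_of_lt haltb)
        have e2 : (u + w * 2 ^ (b - a)) * 2 ^ a + 1 * 2 ^ (m - 1)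
            = ((u + w * 2 ^ (b - a)) + 1 * 2 ^ (m - 1 - a)) * 2 ^ a :=
          rep_add (by omega)
        have h2 : w * 2 ^ b + u * 2 ^ a + 1 * 2 ^ (m - 1) = u2 * 2 ^ a := by
          calc w * 2 ^ b + u * 2 ^ a + 1 * 2 ^ (m - 1)
              = (u * 2 ^ a + w * 2 ^ b) + 1 * 2 ^ (m - 1) := by ring
            _ = (u + w * 2 ^ (b - a)) * 2 ^ a + 1 * 2 ^ (m - 1) := by rw [e1]
            _ = ((u + w * 2 ^ (b - a)) + 1 * 2 ^ (m - 1 - a)) * 2 ^ a := e2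
            _ = u2 * 2 ^ a := by rw [e0]
        rw [← h2]
        exact h1
      have hu2p : ¬ (2:ℕ) ∣ u2 := by
        have e0 : u2 = (u + w * 2 ^ (b - a)) + 1 * 2 ^ (m - 1 - a) := by rw [hu2]; ring
        rw [e0]
        exact not_dvd_add_mul_pow (not_dvd_add_mul_pow hu (by omega)) (by omega)
      obtain ⟨x', y'', hg', h1', h2'⟩ := finalize hcl hp hgen' hordc' hA' hB' hu hu2p hAr hrep
      refine ⟨a, a, x', y'', ?_, hg', h1', h2'⟩
      exact ⟨⟨hm1, ha, ha, le_refl m, le_refl m⟩, by omega, fun _ => by omega,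
        Or.inl (le_refl a)⟩
    · by_cases hcase3 : a < b
      · -- a = m-1, b = m : exceptional tuple
        have ham : a = m - 1 := by omega
        have hbm : b = m := by omega
        obtain ⟨x', y', hg', h1', h2'⟩ := finalize hcl hp hgen hordc hA hB hu hw
          (ham ▸ hAr) (hbm ▸ hBr)
        refine ⟨m - 1, m, x', y', ?_, hg', ?_, ?_⟩
        · exact ⟨⟨hm1, by omega, le_refl m, le_refl m, le_refl m⟩, by omega,
            fun _ => by omega, Or.inr ⟨rfl, rfl, rfl, rfl, by omega⟩⟩
        · exact h1'
        · exact h2'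
      · -- a = b = m : move4 then exceptional
        have ham : a = m := by omega
        have hbm : b = m := by omega
        rw [ham] at hAr
        rw [hbm] at hBr
        obtain ⟨hceq, hA2, hB2⟩ := move4 (n1 := m) (n2 := m) hcl (le_refl m) hA hB
        have hgen' : Subgroup.closure {x * y, y} = ⊤ := closure_pair_mulright hgen
        have hordc' := ordKc hcl hm hgen'
        have hA' : (x * y) ^ 2 ^ m = Kc y (x * y) ^ (A + B * 2 ^ (m - m) + (2 ^ m).choose 2) := by
          rw [hceq]; exact hA2
        set u2 := 1 + (u + w) * 2 with hu2
        have hE4 : ((2:ℕ) ^ m).choose 2 ≡ 2 ^ (m - 1) [MOD 2 ^ m] := by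
          have := E_exceptional (d := 0) (n := m) hm1 (by omega) hm1
          simpa using this
        have hrep : A + B * 2 ^ (m - m) + (2 ^ m).choose 2 ≡ u2 * 2 ^ (m - 1) [MOD 2 ^ m] := by
          have h1 : A + B * 2 ^ (m - m) + (2 ^ m).choose 2
              ≡ u * 2 ^ m + (w * 2 ^ m) * 1 + 2 ^ (m - 1) [MOD 2 ^ m] := by
            have h0 : B * 2 ^ (m - m) ≡ (w * 2 ^ m) * 2 ^ (m - m) [MOD 2 ^ m] := hBr.mul_right _
            have := (hAr.add h0).add hE4
            simpa using this
          have h2 : u * 2 ^ m + (w * 2 ^ m) * 1 + 2 ^ (m - 1) = u2 * 2 ^ (m - 1) := by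
            rw [hu2]
            have e3 : (2:ℕ) ^ m = 2 * 2 ^ (m - 1) := by
              rw [← pow_succ']
              congr 1
              omega
            rw [e3]
            ring
          rw [← h2]
          exact h1
        have hu2p : ¬ (2:ℕ) ∣ u2 := by
          rw [hu2]
          omega
        have hBr' : B ≡ w * 2 ^ m [MOD 2 ^ m] := hBr
        obtain ⟨x', y', hg', h1', h2'⟩ := finalize hcl hp hgen' hordc' hA' hB2 hu2p hw hrep hBr'
        refine ⟨m - 1, m, x', y', ?_, hg', h1', h2'⟩
        exact ⟨⟨hm1, by omega, le_refl m, le_refl m, le_refl m⟩, by omega,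
          fun _ => by omega, Or.inr ⟨rfl, rfl, rfl, rfl, by omega⟩⟩

/-- The main normalization: from any good pair produce an admissible tuple with exact relations. -/
lemma normalize_all [Finite G] (hp : p.Prime) (hcl : commutator G ≤ Subgroup.center G)
    (hm : Nat.card (commutator G) = p ^ m) (hm1 : 1 ≤ m) (hmn2 : m ≤ n2) (hn21 : n2 ≤ n1)
    {x0 y0 : G} (hgen0 : Subgroup.closure {x0, y0} = ⊤)
    (hx0 : x0 ^ p ^ n1 ∈ commutator G) (hy0 : y0 ^ p ^ n2 ∈ commutator G) :
    ∃ (s1 s2 : ℕ) (x y : G), Admissible p m n1 n2 s1 s2 ∧ Subgroup.closure {x, y} = ⊤ ∧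
      x ^ p ^ n1 = Kc y x ^ p ^ s1 ∧ y ^ p ^ n2 = Kc y x ^ p ^ s2 := by
  have hppos : 0 < p := hp.pos
  -- initial exponents
  have hsup : Subgroup.closure {x0, y0} ⊔ commutator G = ⊤ := by
    rw [hgen0]; exact top_sup_eq _
  obtain ⟨hcz, -⟩ := commutator_eq_zpowers hcl x0 y0 hsup
  have hordc0 := ordKc hcl hm hgen0
  obtain ⟨A, -, hA⟩ := mem_zpowers_nat (hcz ▸ hx0)
  obtain ⟨B, -, hB⟩ := mem_zpowers_nat (hcz ▸ hy0)
  replace hA : x0 ^ p ^ n1 = Kc y0 x0 ^ A := hA.symm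
  replace hB : y0 ^ p ^ n2 = Kc y0 x0 ^ B := hB.symm
  obtain ⟨a, u, ha, hu, hAr⟩ := exists_rep p m A hp
  obtain ⟨b, w, hb, hw, hBr⟩ := exists_rep p m B hp
  by_cases hreg : p = 2 ∧ n1 = m
  · -- exceptional regime
    obtain ⟨hp2, hn1m⟩ := hreg
    have hn2m : n2 = m := by omega
    rw [hn1m] at hA hn21
    rw [hn2m] at hB hmn2
    rcases le_or_gt a b with hab | hab
    · obtain ⟨s1, s2, x', y', hadm, hg, h1, h2⟩ :=
        regimeE hp hcl hm hm1 hp2 hgen0 hA hB ha hb hu hw hAr hBr hab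
      refine ⟨s1, s2, x', y', ?_, hg, by rw [hn1m]; exact h1, by rw [hn2m]; exact h2⟩
      rw [hn1m, hn2m]
      exact hadm
    · -- swap first : move5
      obtain ⟨h1', h2'⟩ := move5 (n1 := m) (n2 := m) hcl rfl hppos hA hB
        (by rw [← hordc0]; exact pow_orderOf_eq_one _)
      have hgen' : Subgroup.closure {y0, x0} = ⊤ := closure_pair_comm hgen0
      have hoddm : ¬ (2:ℕ) ∣ (2 ^ m - 1) := by
        have h1 : (2:ℕ) ^ m ≥ 2 := by
          calc (2:ℕ) ^ m ≥ 2 ^ 1 := Nat.pow_le_pow_right (by omega) hm1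
            _ = 2 := by norm_num
        have h2 : (2:ℕ) ∣ 2 ^ m := dvd_pow_self 2 (by omega)
        omega
      have hu' : ¬ p ∣ (w * (2 ^ m - 1)) := by
        rw [hp2]
        intro hdvd
        rcases (Nat.Prime.dvd_mul Nat.prime_two).mp hdvd with h | h
        · exact hw (hp2 ▸ h)
        · exact hoddm h
      have hw' : ¬ p ∣ (u * (2 ^ m - 1)) := by
        rw [hp2]
        intro hdvd
        rcases (Nat.Prime.dvd_mul Nat.prime_two).mp hdvd with h | h
        · exact hu (hp2 ▸ h)
        · exact hoddm h
      have hAr' : B * (p ^ m - 1) ≡ (w * (2 ^ m - 1)) * p ^ b [MOD p ^ m] := by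
        have := hBr.mul_right (p ^ m - 1)
        rw [hp2] at this ⊢
        calc B * (2 ^ m - 1) ≡ w * 2 ^ b * (2 ^ m - 1) [MOD 2 ^ m] := this
          _ = (w * (2 ^ m - 1)) * 2 ^ b := by ring
      have hBr' : A * (p ^ m - 1) ≡ (u * (2 ^ m - 1)) * p ^ a [MOD p ^ m] := by
        have := hAr.mul_right (p ^ m - 1)
        rw [hp2] at this ⊢
        calc A * (2 ^ m - 1) ≡ u * 2 ^ a * (2 ^ m - 1) [MOD 2 ^ m] := this
          _ = (u * (2 ^ m - 1)) * 2 ^ a := by ring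
      obtain ⟨s1, s2, x', y', hadm, hg, h1, h2⟩ :=
        regimeE hp hcl hm hm1 hp2 hgen' h1' h2' hb ha hu' hw' hAr' hBr' (le_of_lt hab)
      refine ⟨s1, s2, x', y', ?_, hg, by rw [hn1m]; exact h1, by rw [hn2m]; exact h2⟩
      rw [hn1m, hn2m]
      exact hadm
  · -- generic regime : E₃ and E₄ vanish mod p^m
    have hE3 : (p:ℕ) ^ m ∣ p ^ (n1 - n2) * (p ^ n2).choose 2 := by
      rcases eq_or_ne p 2 with hp2 | hp2
      · subst hp2
        apply E_dvd_two (by omega)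
        have : n1 ≠ m := fun h => hreg ⟨rfl, h⟩
        omega
      · exact E_dvd_odd hp hp2 (by omega) (by omega)
    have hE4 : (p:ℕ) ^ m ∣ (p ^ n1).choose 2 := by
      have h0 : (p:ℕ) ^ m ∣ p ^ 0 * (p ^ n1).choose 2 := by
        rcases eq_or_ne p 2 with hp2 | hp2
        · subst hp2
          apply E_dvd_two (by omega)
          have : n1 ≠ m := fun h => hreg ⟨rfl, h⟩
          omega
        · exact E_dvd_odd hp hp2 (by omega) (by omega)
      simpa using h0
    have hA3 : p = 2 → m < n1 := by
      intro hp2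
      have : n1 ≠ m := fun h => hreg ⟨hp2, h⟩
      omega
    rcases le_or_gt b a with hba | hba
    · rcases le_or_gt a (b + (n1 - n2)) with hle | hgt
      · -- done directly
        obtain ⟨x', y', hg', h1', h2'⟩ := finalize hcl hp hgen0 hordc0 hA hB hu hw hAr hBr
        refine ⟨a, b, x', y', ?_, hg', h1', h2'⟩
        refine ⟨⟨hm1, ha, hb, hmn2, hn21⟩, by omega, fun h2 => ?_, Or.inl hba⟩
        have := hA3 h2
        omega
      · -- move4
        obtain ⟨hceq, hA2, hB2⟩ := move4 hcl hn21 hA hB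
        have hgen' : Subgroup.closure {x0 * y0, y0} = ⊤ := closure_pair_mulright hgen0
        have hordc' := ordKc hcl hm hgen'
        have hA' : (x0 * y0) ^ p ^ n1
            = Kc y0 (x0 * y0) ^ (A + B * p ^ (n1 - n2) + (p ^ n1).choose 2) := by
          rw [hceq]; exact hA2
        set u2 := w + u * p ^ (a - (b + (n1 - n2))) with hu2
        have hrep : A + B * p ^ (n1 - n2) + (p ^ n1).choose 2
            ≡ u2 * p ^ (b + (n1 - n2)) [MOD p ^ m] := by
          have h1 : A + B * p ^ (n1 - n2) + (p ^ n1).choose 2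
              ≡ u * p ^ a + (w * p ^ b) * p ^ (n1 - n2) + 0 [MOD p ^ m] := by
            exact (hAr.add (hBr.mul_right _)).add ((Nat.modEq_zero_iff_dvd).mpr hE4)
          have h2 : u * p ^ a + (w * p ^ b) * p ^ (n1 - n2) + 0
              = w * p ^ (b + (n1 - n2)) + u * p ^ a := by
            rw [pow_add]
            ring
          have h3 : w * p ^ (b + (n1 - n2)) + u * p ^ a = u2 * p ^ (b + (n1 - n2)) :=
            rep_add (by omega)
          calc A + B * p ^ (n1 - n2) + (p ^ n1).choose 2
              ≡ u * p ^ a + (w * p ^ b) * p ^ (n1 - n2) + 0 [MOD p ^ m] := h1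
            _ = u2 * p ^ (b + (n1 - n2)) := by rw [h2, h3]
        have hu2p : ¬ p ∣ u2 := by
          rw [hu2]
          exact not_dvd_add_mul_pow hw (by omega)
        obtain ⟨x', y', hg', h1', h2'⟩ := finalize hcl hp hgen' hordc' hA' hB2 hu2p hw hrep hBr
        refine ⟨b + (n1 - n2), b, x', y', ?_, hg', h1', h2'⟩
        refine ⟨⟨hm1, by omega, hb, hmn2, hn21⟩, by omega, fun h2 => ?_, Or.inl (by omega)⟩
        have := hA3 h2
        omega
    · -- move3
      obtain ⟨hceq, hB2⟩ := move3 hcl hn21 hppos hA hB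
        (by rw [← hordc0]; exact pow_orderOf_eq_one _)
      set yy := y0 * x0 ^ p ^ (n1 - n2) with hyy
      have hgen' : Subgroup.closure {x0, yy} = ⊤ := closure_pair_mulpow hgen0 _
      have hordc' := ordKc hcl hm hgen'
      have hA' : x0 ^ p ^ n1 = Kc yy x0 ^ A := by rw [hceq]; exact hA
      have hB' : yy ^ p ^ n2
          = Kc yy x0 ^ (B + A + p ^ (n1 - n2) * (p ^ n2).choose 2 * (p ^ m - 1)) := by
        rw [hceq]; exact hB2
      set u2 := u + w * p ^ (b - a) with hu2
      have hrep : B + A + p ^ (n1 - n2) * (p ^ n2).choose 2 * (p ^ m - 1)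
          ≡ u2 * p ^ a [MOD p ^ m] := by
        have h1 : B + A + p ^ (n1 - n2) * (p ^ n2).choose 2 * (p ^ m - 1)
            ≡ w * p ^ b + u * p ^ a + 0 [MOD p ^ m] := by
          exact (hBr.add hAr).add ((Nat.modEq_zero_iff_dvd).mpr (Dvd.dvd.mul_right hE3 _))
        have h2 : w * p ^ b + u * p ^ a + 0 = u * p ^ a + w * p ^ b := by ring
        have h3 : u * p ^ a + w * p ^ b = u2 * p ^ a := rep_add (by omega)
        calc B + A + p ^ (n1 - n2) * (p ^ n2).choose 2 * (p ^ m - 1)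
            ≡ w * p ^ b + u * p ^ a + 0 [MOD p ^ m] := h1
          _ = u2 * p ^ a := by rw [h2, h3]
      have hu2p : ¬ p ∣ u2 := by
        rw [hu2]
        exact not_dvd_add_mul_pow hu (by omega)
      obtain ⟨x', y', hg', h1', h2'⟩ := finalize hcl hp hgen' hordc' hA' hB' hu hu2p hAr hrep
      refine ⟨a, a, x', y', ?_, hg', h1', h2'⟩
      refine ⟨⟨hm1, ha, ha, hmn2, hn21⟩, by omega, fun h2 => ?_, Or.inl (le_refl a)⟩
      have := hA3 h2
      omega

end Normalize


theorem exists_admissible_tuple_iso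
    (p : ℕ) (hp : p.Prime) (G : Type*) [Group G] [Finite G] (hGp : IsPGroup p G)
    (h2gen : ∃ a b : G, Subgroup.closure {a, b} = ⊤)
    (hclass : commutator G ≤ Subgroup.center G) (hnt : commutator G ≠ ⊥) :
    ∃ m n1 n2 s1 s2 : ℕ, Admissible p m n1 n2 s1 s2 ∧
      Nonempty (G ≃* GG p m n1 n2 s1 s2) := by
  classical
  have hfp : Fact p.Prime := ⟨hp⟩
  obtain ⟨g1, g2, hgen12⟩ := h2gen
  -- m
  have hcommP : IsPGroup p (commutator G) := hGp.to_subgroup _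
  obtain ⟨m, hm⟩ := (IsPGroup.iff_card).mp hcommP
  have hm1 : 1 ≤ m := by
    rcases Nat.eq_zero_or_pos m with h | h
    · exfalso
      apply hnt
      apply Subgroup.card_eq_one.mp
      rw [hm, h, pow_zero]
    · exact h
  -- the abelianization
  have hAb : IsPGroup p (Abelianization G) := IsPGroup.to_quotient hGp (commutator G)
  have hofsurj : Function.Surjective (Abelianization.of (G := G)) :=
    fun q => Quotient.inductionOn' q (fun g => ⟨g, rfl⟩)
  have hker : (Abelianization.of (G := G)).ker = commutator G := by
    ext g
    constructor
    · intro h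
      exact (QuotientGroup.eq_one_iff g).mp h
    · intro h
      exact (QuotientGroup.eq_one_iff g).mpr h
  have hgenA : Subgroup.closure {Abelianization.of g1, Abelianization.of g2} = ⊤ := by
    have h1 : Subgroup.map Abelianization.of (Subgroup.closure {g1, g2})
        = Subgroup.closure {Abelianization.of g1, Abelianization.of g2} := by
      rw [MonoidHom.map_closure]
      congr 1
      exact Set.image_pair _ _ _
    rw [← h1, hgen12]
    exact Subgroup.map_top_of_surjective _ hofsurj
  obtain ⟨u, v, hguv, hdisj, hvu⟩ := abelian_pair_decomp hp hAb _ _ hgenA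
  obtain ⟨n1, hn1⟩ := orderOf_eq_pow_of_pgroup hp hAb u
  obtain ⟨n2, hn2⟩ := orderOf_eq_pow_of_pgroup hp hAb v
  have hn21 : n2 ≤ n1 := by
    rw [hn1, hn2] at hvu
    exact (Nat.pow_le_pow_iff_right hp.one_lt).mp hvu
  -- preimages
  obtain ⟨x0, hx0u⟩ := hofsurj u
  obtain ⟨y0, hy0v⟩ := hofsurj v
  have hsup : Subgroup.closure {x0, y0} ⊔ commutator G = ⊤ := by
    have h1 : Subgroup.map Abelianization.of (Subgroup.closure {x0, y0})
        = Subgroup.closure {u, v} := by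
      rw [MonoidHom.map_closure]
      congr 1
      rw [Set.image_pair, hx0u, hy0v]
    have h2 := Subgroup.comap_map_eq Abelianization.of (Subgroup.closure {x0, y0})
    rw [h1, hguv, hker] at h2
    rw [← h2]
    exact Subgroup.comap_top _
  obtain ⟨hcz, hgen0⟩ := commutator_eq_zpowers hclass x0 y0 hsup
  -- n2 ≥ 1
  have hn2pos : 1 ≤ n2 := by
    by_contra hcon
    have hv1 : v = 1 := by
      apply orderOf_eq_one_iff.mp
      rw [hn2]
      have : n2 = 0 := by omega
      rw [this, pow_zero]
    -- then G would be abelian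
    apply hnt
    have hsup1 : Subgroup.closure {x0, (1 : G)} ⊔ commutator G = ⊤ := by
      have h1 : Subgroup.map Abelianization.of (Subgroup.closure {x0, (1:G)})
          = Subgroup.closure {u, v} := by
        rw [MonoidHom.map_closure]
        congr 1
        rw [Set.image_pair, hx0u, map_one, hv1]
      have h2 := Subgroup.comap_map_eq Abelianization.of (Subgroup.closure {x0, (1:G)})
      rw [h1, hguv, hker] at h2
      rw [← h2]
      exact Subgroup.comap_top _
    obtain ⟨hcz1, -⟩ := commutator_eq_zpowers hclass x0 1 hsup1
    rw [hcz1, Kc_one_left]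
    exact Subgroup.zpowers_one_eq_bot
  -- membership of powers in the commutator subgroup
  have hx0mem : x0 ^ p ^ n1 ∈ commutator G := by
    rw [← hker]
    show Abelianization.of (x0 ^ p ^ n1) = 1
    rw [map_pow, hx0u, ← hn1]
    exact pow_orderOf_eq_one u
  have hy0mem : y0 ^ p ^ n2 ∈ commutator G := by
    rw [← hker]
    show Abelianization.of (y0 ^ p ^ n2) = 1
    rw [map_pow, hy0v, ← hn2]
    exact pow_orderOf_eq_one v
  -- m ≤ n2
  have hordc0 : orderOf (Kc y0 x0) = p ^ m := ordKc hclass hm hgen0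
  have hmn2 : m ≤ n2 := by
    have hccom : ∀ g : G, Commute (Kc y0 x0) g := fun g => Kc_commute hclass y0 x0 g
    have h1 : Kc y0 x0 ^ p ^ n2 = Kc (y0 ^ p ^ n2) x0 ^ 1 := by
      rw [pow_one, Kc_pow_left hccom (swap_eq y0 x0) (p ^ n2)]
    have h2 : Kc (y0 ^ p ^ n2) x0 = 1 := by
      apply Kc_central_left
      intro g
      have := hclass hy0mem
      exact ((Subgroup.mem_center_iff.mp this g).symm : _)
    have h3 : Kc y0 x0 ^ p ^ n2 = 1 := by rw [h1, h2, one_pow]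
    have h4 := orderOf_dvd_of_pow_eq_one h3
    rw [hordc0] at h4
    exact (Nat.pow_dvd_pow_iff_le_right hp.one_lt).mp h4
  -- normalize
  obtain ⟨s1, s2, x, y, hadm, hgen, hrel1, hrel2⟩ :=
    normalize_all hp hclass hm hm1 hmn2 hn21 hgen0 hx0mem hy0mem
  refine ⟨m, n1, n2, s1, s2, hadm, ?_⟩
  -- cardinalities
  have hcardG : Nat.card G = Nat.card (Abelianization G) * p ^ m := by
    rw [← hm]
    exact Subgroup.card_eq_card_quotient_mul_card_subgroup (commutator G)
  have hcardAb : p ^ n1 * p ^ n2 ≤ Nat.card (Abelianization G) := by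
    set H := Subgroup.zpowers u
    set K := Subgroup.zpowers v
    let ψ : H × K →* Abelianization G := MonoidHom.mk' (fun q => (q.1 : Abelianization G) * q.2)
      (by
        rintro ⟨h1, k1⟩ ⟨h2, k2⟩
        show ((h1 * h2 : H) : Abelianization G) * ((k1 * k2 : K) : Abelianization G)
          = (h1 : Abelianization G) * k1 * ((h2 : Abelianization G) * k2)
        push_cast
        exact mul_mul_mul_comm _ _ _ _)
    have hinj : Function.Injective ψ := by
      rw [← MonoidHom.ker_eq_bot_iff]
      rw [Subgroup.eq_bot_iff_forall]
      rintro ⟨h1, k1⟩ hmem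
      have h2 : (h1 : Abelianization G) * k1 = 1 := hmem
      have h3 : (h1 : Abelianization G) = (k1 : Abelianization G)⁻¹ :=
        eq_inv_of_mul_eq_one_left h2
      have h4 : (h1 : Abelianization G) ∈ H ⊓ K :=
        Subgroup.mem_inf.mpr ⟨h1.2, by rw [h3]; exact inv_mem k1.2⟩
      rw [hdisj] at h4
      have h5 : (h1 : Abelianization G) = 1 := h4
      have h6 : (k1 : Abelianization G) = 1 := by
        rw [h5] at h3
        rw [← inv_inv (k1 : Abelianization G), ← h3, inv_one]
      ext
      · exact h5
      · exact h6
    have := Nat.card_le_card_of_injective ψ hinj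
    calc p ^ n1 * p ^ n2 = Nat.card H * Nat.card K := by
          rw [Nat.card_zpowers, Nat.card_zpowers, hn1, hn2]
      _ = Nat.card (H × K) := (Nat.card_prod _ _).symm
      _ ≤ Nat.card (Abelianization G) := this
  obtain ⟨hGGfin, hGGcard⟩ := GGaux.GG_finite_card (p:=p) (m:=m) (n1:=n1) (n2:=n2) (s1:=s1) (s2:=s2) hp.pos
  -- the homomorphism
  set c := Kc y x with hc0
  have hordc : orderOf c = p ^ m := ordKc hclass hm hgen
  have hccomm : ∀ g : G, Commute c g := fun g => Kc_commute hclass y x g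
  set fmap : Fin 2 → G := ![x, y] with hfmap
  have hrels : ∀ r ∈ pgRels p m n1 n2 s1 s2, FreeGroup.lift fmap r = 1 := by
    intro r hr
    simp only [pgRels, Set.mem_insert_iff, Set.mem_singleton_iff] at hr
    have hlift0 : FreeGroup.lift fmap (FreeGroup.of 0) = x := by
      rw [FreeGroup.lift_apply_of]; rfl
    have hlift1 : FreeGroup.lift fmap (FreeGroup.of 1) = y := by
      rw [FreeGroup.lift_apply_of]; rfl
    have hlifta : FreeGroup.lift fmap
        ((FreeGroup.of 1)⁻¹ * (FreeGroup.of 0)⁻¹ * FreeGroup.of 1 * FreeGroup.of 0) = c := by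
      simp only [map_mul, map_inv, hlift0, hlift1]
      rfl
    rcases hr with rfl | rfl | rfl | rfl | rfl
    · rw [map_pow, hlifta, ← hordc]
      exact pow_orderOf_eq_one c
    · simp only [map_mul, map_inv, hlift0, hlifta]
      have := (hccomm x).eq
      calc x⁻¹ * c⁻¹ * x * c = x⁻¹ * c⁻¹ * (x * c) := by group
        _ = x⁻¹ * c⁻¹ * (c * x) := by rw [← this]
        _ = 1 := by group
    · simp only [map_mul, map_inv, hlift1, hlifta]
      have := (hccomm y).eq
      calc y⁻¹ * c⁻¹ * y * c = y⁻¹ * c⁻¹ * (y * c) := by group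
        _ = y⁻¹ * c⁻¹ * (c * y) := by rw [← this]
        _ = 1 := by group
    · simp only [map_mul, map_inv, map_pow, hlift0, hlifta]
      rw [hrel1]
      group
    · simp only [map_mul, map_inv, map_pow, hlift1, hlifta]
      rw [hrel2]
      group
  set π : GG p m n1 n2 s1 s2 →* G := PresentedGroup.toGroup hrels with hπ
  have hπ0 : π (PresentedGroup.of 0) = x := PresentedGroup.toGroup.of hrels
  have hπ1 : π (PresentedGroup.of 1) = y := PresentedGroup.toGroup.of hrels
  have hπsurj : Function.Surjective π := by
    rw [← MonoidHom.range_eq_top]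
    rw [eq_top_iff, ← hgen, Subgroup.closure_le]
    intro z hz
    rcases hz with rfl | hz
    · exact ⟨PresentedGroup.of 0, hπ0⟩
    · rcases hz with rfl
      exact ⟨PresentedGroup.of 1, hπ1⟩
  have hcard1 : Nat.card G ≤ Nat.card (GG p m n1 n2 s1 s2) :=
    Nat.card_le_card_of_surjective π hπsurj
  have hcard2 : Nat.card (GG p m n1 n2 s1 s2) = Nat.card G := by
    have h1 : p ^ n1 * p ^ n2 * p ^ m ≤ Nat.card G := by
      rw [hcardG]
      calc p ^ n1 * p ^ n2 * p ^ m ≤ Nat.card (Abelianization G) * p ^ m :=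
            Nat.mul_le_mul_right _ hcardAb
        _ = _ := rfl
    omega
  have hbij : Function.Bijective π := by
    rw [Nat.bijective_iff_surjective_and_card]
    exact ⟨hπsurj, hcard2⟩
  exact ⟨(MulEquiv.ofBijective π hbij).symm⟩
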